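/- arXiv:0911.0085 — 5 statements merged into one kernel-verified Lean document; each statement's English description precedes it below -/
import Mathlib

section
/- Let p be a prime, S a finite p-group, and X a finite bifree (S,S)-biset with |X|/|S| prime to p, such that Pre-Fix(X) is level-wise closed. Let P ≤ S and assume |X^{(P,φ)}| = |X^{(P,ψ)}| for all φ, ψ ∈ Hom_{Pre-Fix(X)}(P,S). Then Pre-Fix(X) is saturated at P. -/
/-! ## Bisets -/

/-- A `(G,H)`-biset structure on a type `X`: a left `H`-action and a right `G`-action
that commute with each other. -/
structure BisetAction (G H : Type*) [Group G] [Group H] (X : Type*) where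
  /-- the left `H`-action -/
  smul : H → X → X
  /-- the right `G`-action -/
  rmul : X → G → X
  one_smul : ∀ x, smul 1 x = x
  mul_smul : ∀ h₁ h₂ x, smul (h₁ * h₂) x = smul h₁ (smul h₂ x)
  rmul_one : ∀ x, rmul x 1 = x
  rmul_mul : ∀ x g₁ g₂, rmul x (g₁ * g₂) = rmul (rmul x g₁) g₂
  smul_rmul : ∀ h x g, rmul (smul h x) g = smul h (rmul x g)

namespace BisetAction

variable {G H K : Type*} [Group G] [Group H] [Group K] {X Y Z : Type*}

lemma smul_smul (A : BisetAction G H X) (h₁ h₂ : H) (x : X) :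
    A.smul h₁ (A.smul h₂ x) = A.smul (h₁ * h₂) x := (A.mul_smul h₁ h₂ x).symm

lemma rmul_rmul (A : BisetAction G H X) (x : X) (g₁ g₂ : G) :
    A.rmul (A.rmul x g₁) g₂ = A.rmul x (g₁ * g₂) := (A.rmul_mul x g₁ g₂).symm

/-- The biset is left-free. -/
def LeftFree (A : BisetAction G H X) : Prop := ∀ (h : H) (x : X), A.smul h x = x → h = 1

/-- The biset is right-free. -/
def RightFree (A : BisetAction G H X) : Prop := ∀ (g : G) (x : X), A.rmul x g = x → g = 1

/-- The biset is bifree: both actions are free. -/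
def Bifree (A : BisetAction G H X) : Prop := A.LeftFree ∧ A.RightFree

/-- The fixed-point set `X^{(P,φ)} = {x | x·u = φ(u)·x for all u ∈ P}`. -/
def Fix (A : BisetAction G H X) (P : Subgroup G) (φ : P →* H) : Set X :=
  {x | ∀ u : P, A.rmul x u = A.smul (φ u) x}

/-- The opposite biset: same underlying set, with the two actions reversed
(`g·x·h` in `op A` is `h⁻¹·x·g⁻¹` in `A`). -/
def op (A : BisetAction G H X) : BisetAction H G X where
  smul g x := A.rmul x g⁻¹
  rmul x h := A.smul h⁻¹ x
  one_smul x := by simpa using A.rmul_one x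
  mul_smul g₁ g₂ x := by rw [mul_inv_rev, A.rmul_mul]
  rmul_one x := by simpa using A.one_smul x
  rmul_mul x h₁ h₂ := by rw [mul_inv_rev, A.mul_smul]
  smul_rmul g x h := (A.smul_rmul h⁻¹ x g⁻¹).symm

/-- The setoid of left `H`-orbits. -/
def leftOrbitSetoid (A : BisetAction G H X) : Setoid X where
  r x y := ∃ h : H, y = A.smul h x
  iseqv := by
    refine ⟨fun x => ⟨1, (A.one_smul x).symm⟩, ?_, ?_⟩
    · rintro x y ⟨h, rfl⟩
      exact ⟨h⁻¹, by rw [A.smul_smul, inv_mul_cancel, A.one_smul]⟩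
    · rintro x y z ⟨h₁, rfl⟩ ⟨h₂, rfl⟩
      exact ⟨h₂ * h₁, A.smul_smul h₂ h₁ x⟩

/-- The set of left `H`-orbits of the biset. -/
def leftOrbits (A : BisetAction G H X) : Type _ := Quotient (A.leftOrbitSetoid)

/-- Restricting the right action along a homomorphism `φ : P →* G`. -/
def restrictRight (A : BisetAction G H X) {P : Type*} [Group P] (φ : P →* G) :
    BisetAction P H X where
  smul := A.smul
  rmul x u := A.rmul x (φ u)
  one_smul := A.one_smul
  mul_smul := A.mul_smul
  rmul_one x := by rw [map_one, A.rmul_one]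
  rmul_mul x u₁ u₂ := by rw [map_mul, A.rmul_mul]
  smul_rmul h x u := A.smul_rmul h x (φ u)

/-- Restricting the left action along a homomorphism `φ : P →* H`. -/
def restrictLeft (A : BisetAction G H X) {P : Type*} [Group P] (φ : P →* H) :
    BisetAction G P X where
  smul u x := A.smul (φ u) x
  rmul := A.rmul
  one_smul x := by rw [map_one, A.one_smul]
  mul_smul u₁ u₂ x := by rw [map_mul, A.mul_smul]
  rmul_one := A.rmul_one
  rmul_mul := A.rmul_mul
  smul_rmul u x g := A.smul_rmul (φ u) x g

end BisetAction

/-- An isomorphism of `(G,H)`-bisets: an equivalence of underlying sets commuting with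
both actions. -/
structure BisetIso {G H : Type*} [Group G] [Group H] {X Y : Type*}
    (A : BisetAction G H X) (B : BisetAction G H Y) extends X ≃ Y where
  map_smul : ∀ (h : H) (x : X), toEquiv (A.smul h x) = B.smul h (toEquiv x)
  map_rmul : ∀ (x : X) (g : G), toEquiv (A.rmul x g) = B.rmul (toEquiv x) g

/-! ## Collections of morphisms between subgroups -/

section Collections

variable {S : Type*} [Group S]

/-- The conjugation homomorphism `P →* S`, `u ↦ s * u * s⁻¹`. -/
def conjHom (s : S) (P : Subgroup S) : P →* S :=
  (MulAut.conj s).toMonoidHom.comp P.subtype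

/-- A "collection" of morphism sets on the poset of subgroups of `S`:
for each pair of subgroups `P Q ≤ S` a set of group homomorphisms `P →* S`
(to be thought of as morphisms from `P` to `Q`, i.e. maps landing in `Q`). -/
abbrev Collection (S : Type*) [Group S] :=
  ∀ (P : Subgroup S), Subgroup S → Set (P →* S)

namespace Collection

/-- `P` and `Q` are conjugate in the collection `C` if some morphism of `C`
restricts to an isomorphism from `P` onto `Q`. -/
def IsConj (C : Collection S) (P Q : Subgroup S) : Prop :=
  ∃ φ ∈ C P Q, MonoidHom.range φ = Q

/-- `P` is fully centralized: its centralizer has maximal order in its conjugacy class. -/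
def FullyCentralized (C : Collection S) (P : Subgroup S) : Prop :=
  ∀ Q : Subgroup S, C.IsConj P Q →
    Nat.card (Subgroup.centralizer (Q : Set S)) ≤ Nat.card (Subgroup.centralizer (P : Set S))

/-- `P` is fully normalized: its normalizer has maximal order in its conjugacy class. -/
def FullyNormalized (C : Collection S) (P : Subgroup S) : Prop :=
  ∀ Q : Subgroup S, C.IsConj P Q → Nat.card (Subgroup.normalizer (Q : Set S)) ≤ Nat.card (Subgroup.normalizer (P : Set S))

end Collection

/-- The set `Aut_S(P)` of automorphisms of `P` induced by conjugation by elements of the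
normalizer `N_S(P)`, as a set of homomorphisms `P →* S`. -/
def autSSet (P : Subgroup S) : Set (P →* S) :=
  {φ | ∃ s ∈ Subgroup.normalizer (P : Set S), φ = conjHom s P}

/-- `Aut_S(P)` is a Sylow `p`-subgroup of `Aut_C(P) = C P P`:  `Aut_S(P)` is contained
in `Aut_C(P)`, has `p`-power order, and has index prime to `p` in `Aut_C(P)`. -/
def Collection.AutSIsSylow (p : ℕ) (C : Collection S) (P : Subgroup S) : Prop :=
  autSSet P ⊆ C P P ∧ (∃ n : ℕ, Nat.card (autSSet P) = p ^ n) ∧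
    ∃ k : ℕ, ¬ p ∣ k ∧ Nat.card (C P P) = k * Nat.card (autSSet P)

/-- A collection is level-wise closed if it contains all conjugation maps induced by `S`,
the inverse of every isomorphism it contains, and all composites of composable
isomorphisms it contains. -/
def LevelwiseClosed (C : Collection S) : Prop :=
  (∀ (P Q : Subgroup S) (s : S), (∀ u ∈ P, s * u * s⁻¹ ∈ Q) → conjHom s P ∈ C P Q) ∧
  (∀ (P Q : Subgroup S), ∀ φ ∈ C P Q, MonoidHom.range φ = Q → ∀ ψ : Q →* S,
    (∀ (u : P) (hq : (φ u : S) ∈ Q), ψ ⟨φ u, hq⟩ = u) → ψ ∈ C Q P) ∧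
  (∀ (P Q R : Subgroup S) (φ : P →* S), φ ∈ C P Q → ∀ ψ : Q →* S, ψ ∈ C Q R →
    ∀ hφ : MonoidHom.range φ = Q, MonoidHom.range ψ = R →
    ψ.comp (φ.codRestrict Q (fun u => hφ ▸ show φ u ∈ φ.range from ⟨u, rfl⟩)) ∈ C P R)

end Collections

/-! ## Fusion systems -/

section Fusion

variable {S : Type*} [Group S]

/-- A fusion system on a group `S`: for each pair of subgroups `P, Q ≤ S`, a set
`Hom P Q` of injective homomorphisms `P → Q` (represented as homomorphisms `P →* S`
with image contained in `Q`), containing all conjugation maps induced by `S`, closed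
under composition, and such that every morphism restricts to an isomorphism onto its
image lying in the fusion system, whose inverse also lies in the fusion system. -/
structure FusionSystem (S : Type*) [Group S] where
  Hom : Collection S
  injective' : ∀ {P Q : Subgroup S} {φ : P →* S}, φ ∈ Hom P Q → Function.Injective φ
  mapsTo' : ∀ {P Q : Subgroup S} {φ : P →* S}, φ ∈ Hom P Q → ∀ u : P, φ u ∈ Q
  conj_mem' : ∀ (P Q : Subgroup S) (s : S), (∀ u ∈ P, s * u * s⁻¹ ∈ Q) →
    conjHom s P ∈ Hom P Q
  comp_mem' : ∀ {P Q R : Subgroup S} {φ : P →* S} {ψ : Q →* S},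
    (hφ : φ ∈ Hom P Q) → (hψ : ψ ∈ Hom Q R) →
    ψ.comp (φ.codRestrict Q (mapsTo' hφ)) ∈ Hom P R
  target_mem' : ∀ {P Q : Subgroup S} {φ : P →* S}, φ ∈ Hom P Q → φ ∈ Hom P φ.range
  inv_mem' : ∀ {P Q : Subgroup S} {φ : P →* S}, φ ∈ Hom P Q →
    ∃ ψ ∈ Hom φ.range P, ∀ u : P, ψ ⟨φ u, ⟨u, rfl⟩⟩ = u

/-- The subgroup `N_φ = {x ∈ N_S(P) | ∃ y ∈ N_S(φ(P)), ∀ u ∈ P, φ(xux⁻¹) = yφ(u)y⁻¹}`. -/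
def Nphi (P : Subgroup S) (φ : P →* S) : Subgroup S where
  carrier := {x | x ∈ Subgroup.normalizer (P : Set S) ∧ ∃ y ∈ Subgroup.normalizer (φ.range : Set S),
    ∀ (u v : S) (hu : u ∈ P) (hv : v ∈ P), v = x * u * x⁻¹ →
      φ ⟨v, hv⟩ = y * φ ⟨u, hu⟩ * y⁻¹}
  one_mem' := by
    refine ⟨(Subgroup.normalizer (P : Set S)).one_mem, 1, (Subgroup.normalizer (φ.range : Set S)).one_mem, ?_⟩
    intro u v hu hv hveq
    have h1 : (⟨v, hv⟩ : P) = ⟨u, hu⟩ := Subtype.ext (show v = u by rw [hveq]; group)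
    rw [h1]; group
  mul_mem' := by
    rintro x₁ x₂ ⟨hx₁, y₁, hy₁, h₁⟩ ⟨hx₂, y₂, hy₂, h₂⟩
    refine ⟨mul_mem hx₁ hx₂, y₁ * y₂, mul_mem hy₁ hy₂, ?_⟩
    intro u v hu hv hveq
    have hw : x₂ * u * x₂⁻¹ ∈ P := (Subgroup.mem_normalizer_iff.mp hx₂ u).mp hu
    have e1 : φ ⟨v, hv⟩ = y₁ * φ ⟨x₂ * u * x₂⁻¹, hw⟩ * y₁⁻¹ :=
      h₁ _ _ hw hv (by rw [hveq]; group)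
    have e2 : φ ⟨x₂ * u * x₂⁻¹, hw⟩ = y₂ * φ ⟨u, hu⟩ * y₂⁻¹ := h₂ _ _ hu hw rfl
    rw [e1, e2]; group
  inv_mem' := by
    rintro x ⟨hx, y, hy, h⟩
    refine ⟨Subgroup.inv_mem _ hx, y⁻¹, Subgroup.inv_mem _ hy, ?_⟩
    intro u v hu hv hveq
    have e1 : φ ⟨u, hu⟩ = y * φ ⟨v, hv⟩ * y⁻¹ :=
      h _ _ hv hu (by rw [hveq]; group)
    rw [e1]; group

namespace FusionSystem

/-- Axiom I of saturation: every fully normalized subgroup is fully centralized and its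
`S`-automorphism group is a Sylow `p`-subgroup of its full automorphism group. -/
def AxiomI (p : ℕ) (F : FusionSystem S) : Prop :=
  ∀ P : Subgroup S, F.Hom.FullyNormalized P →
    F.Hom.FullyCentralized P ∧ F.Hom.AutSIsSylow p P

/-- Axiom I restricted to the full subgroup `S` itself:
`Aut_S(S)` is a Sylow `p`-subgroup of `Aut_F(S)`. -/
def AxiomIS (p : ℕ) (F : FusionSystem S) : Prop :=
  F.Hom.AutSIsSylow p ⊤

/-- Axiom II of saturation (the extension axiom): every morphism `φ : P → S` of `F`
whose image is fully centralized extends to a morphism of `F` defined on `N_φ`. -/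
def AxiomII (F : FusionSystem S) : Prop :=
  ∀ (P : Subgroup S) (φ : P →* S), φ ∈ F.Hom P ⊤ →
    F.Hom.FullyCentralized φ.range →
    ∃ φbar ∈ F.Hom (Nphi P φ) ⊤,
      ∀ (u : S) (hu : u ∈ P) (hu' : u ∈ Nphi P φ), φbar ⟨u, hu'⟩ = φ ⟨u, hu⟩

/-- A fusion system is saturated if it satisfies Axioms I and II. -/
def Saturated (p : ℕ) (F : FusionSystem S) : Prop :=
  F.AxiomI p ∧ F.AxiomII

end FusionSystem

/-- The closure of a collection: the smallest fusion system containing it.  (The morphism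
sets of the closure are the intersections of the morphism sets over all fusion systems
containing the collection.) -/
def closureHom (C : Collection S) : Collection S :=
  fun P Q =>
    {φ | ∀ F : FusionSystem S, (∀ P' Q', C P' Q' ⊆ F.Hom P' Q') → φ ∈ F.Hom P Q}

/-- A level-wise closed collection `C` is saturated at `P ≤ S` if:
(I_P) every fully normalized `Q` conjugate to `P` in `C` is fully centralized and
`Aut_S(Q)` is a Sylow `p`-subgroup of `Aut_C(Q)`; and
(II_P) every `φ ∈ Hom_C(P,S)` with fully centralized image extends to a morphism
`N_φ → S` in the closure of `C`. -/
def SaturatedAt (p : ℕ) (C : Collection S) (P : Subgroup S) : Prop :=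
  (∀ Q : Subgroup S, C.IsConj P Q → C.FullyNormalized Q →
    C.FullyCentralized Q ∧ C.AutSIsSylow p Q) ∧
  (∀ φ ∈ C P ⊤, C.FullyCentralized (MonoidHom.range φ) →
    ∃ φbar ∈ closureHom C (Nphi P φ) ⊤,
      ∀ (u : S) (hu : u ∈ P) (hu' : u ∈ Nphi P φ), φbar ⟨u, hu'⟩ = φ ⟨u, hu⟩)

end Fusion

/-- The pre-fusion collection `Pre-Fix(X)`: morphisms from `P` to `Q` are the injective
homomorphisms `φ : P → Q` with nonempty fixed-point set `X^{(P,φ)}`. -/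
def preFixHom {S X : Type*} [Group S] (A : BisetAction S S X) : Collection S :=
  fun P Q => {φ | Function.Injective φ ∧ (∀ u : P, φ u ∈ Q) ∧ (A.Fix P φ).Nonempty}



/-! ### Auxiliary machinery for Statement 12 -/

namespace Stmt12
open BisetAction

section Basic
variable {S : Type*} [Group S] {X : Type*}
variable (A : BisetAction S S X)

lemma left_cancel (hA : A.Bifree) {s t : S} {x : X} (h : A.smul s x = A.smul t x) :
    s = t := by
  have h1 : A.smul (t⁻¹ * s) x = x := by
    rw [A.mul_smul, h, A.smul_smul, inv_mul_cancel, A.one_smul]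
  exact (inv_mul_eq_one.mp (hA.1 _ _ h1)).symm

lemma right_cancel (hA : A.Bifree) {g h : S} {x : X} (h' : A.rmul x g = A.rmul x h) :
    g = h := by
  have h1 : A.rmul (A.rmul x h) (h⁻¹ * g) = A.rmul x h := by
    rw [A.rmul_rmul, mul_inv_cancel_left, h']
  exact (inv_mul_eq_one.mp (hA.2 _ _ h1)).symm

open Classical in
noncomputable def sigFn (x : X) (u : S) : S :=
  if h : ∃ s, A.rmul x u = A.smul s x then h.choose else 1

lemma sigFn_spec {x : X} {u : S} (h : ∃ s, A.rmul x u = A.smul s x) :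
    A.rmul x u = A.smul (sigFn A x u) x := by
  classical
  rw [sigFn, dif_pos h]; exact h.choose_spec

lemma sigFn_eq (hA : A.Bifree) {x : X} {u s : S} (h : A.rmul x u = A.smul s x) :
    sigFn A x u = s :=
  left_cancel A hA ((sigFn_spec A ⟨s, h⟩).symm.trans h)

lemma mem_fix_iff {P : Subgroup S} {φ : P →* S} {x : X} :
    x ∈ A.Fix P φ ↔ ∀ u : P, A.rmul x u = A.smul (φ u) x := Iff.rfl

lemma fix_unique (hA : A.Bifree) {P : Subgroup S} {φ ψ : P →* S} {x : X}
    (hφ : x ∈ A.Fix P φ) (hψ : x ∈ A.Fix P ψ) : φ = ψ := by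
  ext u
  exact left_cancel A hA ((hφ u).symm.trans (hψ u))

/-- `x` is closed under the right `P`-action modulo the left action. -/
def PClosed (P : Subgroup S) (x : X) : Prop :=
  ∀ u : P, ∃ s, A.rmul x u = A.smul s x

/-- The homomorphism `σ_x` on `P`, for `x` which is `P`-closed. -/
noncomputable def sigHom (hA : A.Bifree) (P : Subgroup S) (x : X)
    (hx : PClosed A P x) : P →* S :=
  MonoidHom.mk' (fun u => sigFn A x u) (by
    intro u v
    refine sigFn_eq A hA ?_
    have hu := sigFn_spec A (hx u)
    have hv := sigFn_spec A (hx v)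
    have h2 : A.rmul x ((u : S) * v) = A.smul (sigFn A x u * sigFn A x v) x := by
      rw [A.rmul_mul, hu, A.smul_rmul, hv, A.smul_smul]
    simpa using h2)

lemma mem_fix_sigHom (hA : A.Bifree) (P : Subgroup S) (x : X) (hx : PClosed A P x) :
    x ∈ A.Fix P (sigHom A hA P x hx) := fun u => sigFn_spec A (hx u)

lemma pclosed_of_mem_fix {P : Subgroup S} {φ : P →* S} {x : X} (h : x ∈ A.Fix P φ) :
    PClosed A P x := fun u => ⟨φ u, h u⟩

lemma fix_eq_sigHom_val (hA : A.Bifree) {P : Subgroup S} {φ : P →* S} {x : X}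
    (h : x ∈ A.Fix P φ) (hx : PClosed A P x) : sigHom A hA P x hx = φ :=
  fix_unique A hA (mem_fix_sigHom A hA P x hx) h

/-- Nonempty fixed-point set forces injectivity. -/
lemma fix_injective (hA : A.Bifree) {P : Subgroup S} {φ : P →* S}
    (h : (A.Fix P φ).Nonempty) : Function.Injective φ := by
  obtain ⟨x, hx⟩ := h
  intro u v huv
  have h2 : A.rmul x u = A.rmul x v := by rw [hx u, hx v, huv]
  exact Subtype.ext (right_cancel A hA h2)

end Basic
end Stmt12

namespace Stmt12
open BisetAction

section Count
variable {α β : Type*}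

lemma nat_card_sigma [Fintype β] (g : β → Type*) [∀ b, Finite (g b)] :
    Nat.card (Σ b, g b) = ∑ b : β, Nat.card (g b) := by
  classical
  letI : ∀ b, Fintype (g b) := fun b => Fintype.ofFinite _
  simp [Nat.card_eq_fintype_card, Fintype.card_sigma]

lemma card_eq_sum_fibers [Finite α] [Fintype β] (f : α → β) :
    Nat.card α = ∑ b : β, Nat.card {a // f a = b} := by
  classical
  rw [← nat_card_sigma (fun b => {a // f a = b})]
  exact Nat.card_eq_of_bijective _ (Equiv.sigmaFiberEquiv f).symm.bijective

lemma card_eq_card_mul_of_fiber_const [Finite α] [Finite β] (f : α → β) (k : ℕ)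
    (hk : ∀ b, Nat.card {a // f a = b} = k) :
    Nat.card α = Nat.card β * k := by
  classical
  letI : Fintype β := Fintype.ofFinite β
  rw [card_eq_sum_fibers f]
  simp only [hk, Finset.sum_const, smul_eq_mul, Nat.card_eq_fintype_card]
  rw [Finset.card_univ, mul_comm]

lemma dvd_card_of_dvd_fibers [Finite α] [Finite β] (f : α → β) (p : ℕ)
    (h : ∀ b, p ∣ Nat.card {a // f a = b}) : p ∣ Nat.card α := by
  classical
  letI : Fintype β := Fintype.ofFinite β
  rw [card_eq_sum_fibers f]
  exact Finset.dvd_sum fun b _ => h b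

end Count

section Orbits
variable {S : Type*} [Group S] {X : Type*} (A : BisetAction S S X)

/-- Class of `x` in the set of left `S`-orbits. -/
def mkL (x : X) : A.leftOrbits := Quotient.mk (A.leftOrbitSetoid) x

lemma mkL_surjective : Function.Surjective (mkL A) :=
  fun ℓ => Quotient.exists_rep ℓ

lemma mkL_eq_iff {x y : X} : mkL A x = mkL A y ↔ ∃ h, y = A.smul h x :=
  ⟨fun h => Quotient.exact h, fun h => Quotient.sound h⟩

lemma mkL_smul (s : S) (x : X) : mkL A (A.smul s x) = mkL A x :=
  ((mkL_eq_iff A).mpr ⟨s, rfl⟩).symm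

instance [Finite X] : Finite (A.leftOrbits) := Quotient.finite _

/-- Right translation on the set of left orbits. -/
def rmulL (g : S) : A.leftOrbits → A.leftOrbits :=
  Quotient.map' (fun x => A.rmul x g)
    (by rintro x y ⟨h, rfl⟩; exact ⟨h, A.smul_rmul h x g⟩)

lemma rmulL_mk (g : S) (x : X) : rmulL A g (mkL A x) = mkL A (A.rmul x g) := rfl

lemma rmulL_one (ℓ : A.leftOrbits) : rmulL A 1 ℓ = ℓ := by
  induction ℓ using Quotient.inductionOn
  rw [show (Quotient.mk _ _ : A.leftOrbits) = mkL A _ from rfl, rmulL_mk, A.rmul_one]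

lemma rmulL_mul (g h : S) (ℓ : A.leftOrbits) :
    rmulL A h (rmulL A g ℓ) = rmulL A (g * h) ℓ := by
  induction ℓ using Quotient.inductionOn
  rw [show (Quotient.mk _ _ : A.leftOrbits) = mkL A _ from rfl, rmulL_mk, rmulL_mk, rmulL_mk,
    A.rmul_rmul]

/-- The action of a subgroup `P` on the left-orbit set, by inverse right translation. -/
def pAction (P : Subgroup S) : MulAction P (A.leftOrbits) where
  smul u ℓ := rmulL A ((u : S)⁻¹) ℓ
  one_smul ℓ := by
    show rmulL A _ ℓ = ℓ
    rw [show (((1 : P) : S))⁻¹ = 1 by simp, rmulL_one]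
  mul_smul u v ℓ := by
    show rmulL A _ ℓ = rmulL A _ (rmulL A _ ℓ)
    rw [rmulL_mul]
    congr 1
    simp [mul_comm]

/-- The master counting lemma: if `Y` is a subset of `X` such that translating a point
of `Y` by `s` stays in `Y` exactly when `s ∈ H`, then `|Y| = |H| ⬝ |image of Y in L|`. -/
theorem card_set_eq [Finite S] [Finite X] (hA : A.Bifree) (Y : Set X) (H : Subgroup S)
    (hmem : ∀ x ∈ Y, ∀ s : S, A.smul s x ∈ Y ↔ s ∈ H) :
    Nat.card Y = Nat.card H * Nat.card {ℓ : A.leftOrbits // ∃ x ∈ Y, mkL A x = ℓ} := by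
  classical
  rw [← Nat.card_prod]
  refine (Nat.card_eq_of_bijective (fun z : ↥H × {ℓ : A.leftOrbits // ∃ x ∈ Y, mkL A x = ℓ} =>
    (⟨A.smul z.1 z.2.2.choose, by
      obtain ⟨hx, -⟩ := z.2.2.choose_spec
      exact (hmem _ hx _).mpr z.1.2⟩ : Y)) ⟨?_, ?_⟩).symm
  · rintro ⟨h, ℓ⟩ ⟨h', ℓ'⟩ heq
    have heq' : A.smul (h : S) ℓ.2.choose = A.smul (h' : S) ℓ'.2.choose :=
      congrArg Subtype.val heq
    have hℓ : ℓ = ℓ' := by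
      have h1 : mkL A ℓ.2.choose = mkL A ℓ'.2.choose := by
        refine (mkL_eq_iff A).mpr ⟨(h' : S)⁻¹ * h, ?_⟩
        rw [A.mul_smul, heq', A.smul_smul, inv_mul_cancel, A.one_smul]
      exact Subtype.ext (ℓ.2.choose_spec.2.symm.trans (h1.trans ℓ'.2.choose_spec.2))
    subst hℓ
    have : (h : S) = h' := left_cancel A hA heq'
    simp [Subtype.ext this]
  · rintro ⟨y, hy⟩
    set ℓ : {ℓ : A.leftOrbits // ∃ x ∈ Y, mkL A x = ℓ} := ⟨mkL A y, ⟨y, hy, rfl⟩⟩ with hℓdef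
    obtain ⟨hxY, hxm⟩ := ℓ.2.choose_spec
    obtain ⟨s, hs⟩ := (mkL_eq_iff A).mp hxm
    have hsH : s ∈ H := (hmem _ hxY s).mp (by rw [← hs]; exact hy)
    exact ⟨⟨⟨s, hsH⟩, ℓ⟩, Subtype.ext hs.symm⟩

end Orbits
end Stmt12

namespace Stmt12
open BisetAction

section PAct
variable {S : Type*} [Group S] {X : Type*} (A : BisetAction S S X)
variable {p : ℕ}

/-- An orbit is `P`-fixed if right translation by every element of `P` preserves it. -/
def PFixed (P : Subgroup S) (ℓ : A.leftOrbits) : Prop :=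
  ∀ u : P, rmulL A (u : S) ℓ = ℓ

lemma pfixed_iff_mem_fixedPoints (P : Subgroup S) (ℓ : A.leftOrbits) :
    letI := pAction A P
    PFixed A P ℓ ↔ ℓ ∈ MulAction.fixedPoints P (A.leftOrbits) := by
  letI := pAction A P
  constructor
  · intro h u
    show rmulL A ((u : S)⁻¹) ℓ = ℓ
    have := h u⁻¹
    simpa using this
  · intro h u
    have h2 : rmulL A (((u⁻¹ : P) : S))⁻¹ ℓ = ℓ := h u⁻¹
    simpa using h2

lemma card_pfixed_modEq [Finite S] [Finite X] (hp : p.Prime) (hS : IsPGroup p S)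
    (P : Subgroup S) :
    Nat.card {ℓ : A.leftOrbits // PFixed A P ℓ} ≡ Nat.card (A.leftOrbits) [MOD p] := by
  classical
  letI := pAction A P
  haveI : Fact p.Prime := ⟨hp⟩
  have h1 := (hS.to_subgroup P).card_modEq_card_fixedPoints (A.leftOrbits)
  have h2 : Nat.card {ℓ : A.leftOrbits // PFixed A P ℓ} =
      Nat.card (MulAction.fixedPoints P (A.leftOrbits)) :=
    Nat.card_congr (Equiv.subtypeEquivRight (pfixed_iff_mem_fixedPoints A P))
  rw [h2]
  exact h1.symm

/-- Existence of a fixed orbit in an invariant family with cardinality prime to `p`. -/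
lemma exists_pfixed_of_not_dvd [Finite S] [Finite X] (hp : p.Prime) (hS : IsPGroup p S)
    (K : Subgroup S) (W : Set (A.leftOrbits))
    (hW : ∀ ℓ ∈ W, ∀ g : K, rmulL A (g : S) ℓ ∈ W)
    (hcard : ¬ p ∣ Nat.card W) :
    ∃ ℓ ∈ W, ∀ g : K, rmulL A (g : S) ℓ = ℓ := by
  classical
  haveI : Fact p.Prime := ⟨hp⟩
  letI : MulAction K ↥W :=
    { smul := fun g z => ⟨rmulL A ((g : S)⁻¹) z.1, hW _ z.2 g⁻¹⟩
      one_smul := fun z => by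
        refine Subtype.ext ?_
        show rmulL A _ z.1 = z.1
        rw [show (((1 : K) : S))⁻¹ = 1 by simp, rmulL_one]
      mul_smul := fun g h z => by
        refine Subtype.ext ?_
        show rmulL A _ z.1 = rmulL A _ (rmulL A _ z.1)
        rw [rmulL_mul]
        congr 1
        simp [mul_comm] }
  have h1 := (hS.to_subgroup K).card_modEq_card_fixedPoints (↥W)
  have h3 : Nat.card (MulAction.fixedPoints K ↥W) ≠ 0 := by
    intro h0
    rw [Nat.ModEq] at h1
    rw [h0, Nat.zero_mod] at h1
    exact hcard (Nat.dvd_of_mod_eq_zero h1)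
  have h4 : Nonempty (MulAction.fixedPoints K ↥W) := Nat.card_ne_zero.mp h3 |>.1
  obtain ⟨⟨⟨ℓ, hℓW⟩, hfix⟩⟩ := h4
  refine ⟨ℓ, hℓW, fun g => ?_⟩
  have := hfix g⁻¹
  have h5 : rmulL A (((g⁻¹ : K) : S))⁻¹ ℓ = ℓ := congrArg Subtype.val this
  simpa using h5

end PAct
end Stmt12

namespace Stmt12
open BisetAction

section Calc
variable {S : Type*} [Group S] {X : Type*} (A : BisetAction S S X)

/-- `φ` is a "good" homomorphism: its fixed-point set is nonempty. -/
def Gd (R : Subgroup S) (φ : R →* S) : Prop := (A.Fix R φ).Nonempty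

lemma mem_preFix_iff (hA : A.Bifree) {R Q : Subgroup S} {φ : R →* S} :
    φ ∈ preFixHom A R Q ↔ (∀ u : R, φ u ∈ Q) ∧ Gd A R φ :=
  ⟨fun h => ⟨h.2.1, h.2.2⟩, fun h => ⟨fix_injective A hA h.2, h.1, h.2⟩⟩

lemma mem_preFix_top_iff (hA : A.Bifree) {R : Subgroup S} {φ : R →* S} :
    φ ∈ preFixHom A R ⊤ ↔ Gd A R φ := by
  rw [mem_preFix_iff A hA]
  simp

lemma conjHom_apply (s : S) (R : Subgroup S) (u : R) :
    conjHom s R u = s * u * s⁻¹ := rfl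

/-- Conjugation of subgroups. -/
def sconj (s : S) (R : Subgroup S) : Subgroup S := R.map (MulAut.conj s).toMonoidHom

lemma mem_sconj {s : S} {R : Subgroup S} {x : S} :
    x ∈ sconj s R ↔ ∃ r ∈ R, s * r * s⁻¹ = x := by
  simp [sconj, Subgroup.mem_map]

lemma range_conjHom (s : S) (R : Subgroup S) : (conjHom s R).range = sconj s R := by
  ext x
  simp only [conjHom, sconj, MonoidHom.mem_range, Subgroup.mem_map, MonoidHom.comp_apply]
  constructor
  · rintro ⟨u, rfl⟩; exact ⟨u, u.2, rfl⟩
  · rintro ⟨r, hr, rfl⟩; exact ⟨⟨r, hr⟩, rfl⟩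

lemma sconj_sconj (s t : S) (R : Subgroup S) : sconj s (sconj t R) = sconj (s * t) R := by
  ext x
  simp only [mem_sconj]
  constructor
  · rintro ⟨r, ⟨q, hq, rfl⟩, rfl⟩
    exact ⟨q, hq, by group⟩
  · rintro ⟨q, hq, rfl⟩
    exact ⟨t * q * t⁻¹, ⟨q, hq, rfl⟩, by group⟩

lemma sconj_one (R : Subgroup S) : sconj 1 R = R := by
  ext x; simp [mem_sconj]

lemma sconj_eq_self_iff {s : S} {R : Subgroup S} :
    sconj s R = R ↔ s ∈ (Subgroup.normalizer (R : Set S)) := by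
  rw [Subgroup.mem_normalizer_iff]
  constructor
  · intro h u
    constructor
    · intro hu
      rw [← h]
      exact mem_sconj.mpr ⟨u, hu, rfl⟩
    · intro hu
      have : s * u * s⁻¹ ∈ sconj s R := by rw [h]; exact hu
      obtain ⟨r, hr, hre⟩ := mem_sconj.mp this
      have : r = u := by
        have h4 := mul_right_cancel hre
        exact mul_left_cancel h4
      rwa [← this]
  · intro h
    ext x
    rw [mem_sconj]
    constructor
    · rintro ⟨r, hr, rfl⟩
      exact (h r).mp hr
    · intro hx
      refine ⟨s⁻¹ * x * s, ?_, by group⟩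
      have := (h (s⁻¹ * x * s)).mpr
      simp only [mul_assoc] at this ⊢
      apply this
      simpa [mul_assoc] using hx

/-- Post-conjugation of a homomorphism. -/
def lconj (s : S) {R : Subgroup S} (φ : R →* S) : R →* S :=
  (MulAut.conj s).toMonoidHom.comp φ

lemma lconj_apply (s : S) {R : Subgroup S} (φ : R →* S) (u : R) :
    lconj s φ u = s * φ u * s⁻¹ := rfl

lemma smul_mem_fix {s : S} {R : Subgroup S} {φ : R →* S} {x : X}
    (hx : x ∈ A.Fix R φ) : A.smul s x ∈ A.Fix R (lconj s φ) := by
  intro u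
  rw [A.smul_rmul, hx u, lconj_apply, A.smul_smul, A.smul_smul]
  congr 1
  group

lemma gd_lconj {s : S} {R : Subgroup S} {φ : R →* S} (h : Gd A R φ) :
    Gd A R (lconj s φ) := by
  obtain ⟨x, hx⟩ := h
  exact ⟨A.smul s x, smul_mem_fix A hx⟩

lemma lconj_lconj (s t : S) {R : Subgroup S} (φ : R →* S) :
    lconj s (lconj t φ) = lconj (s * t) φ := by
  ext u; simp [lconj_apply]; group

lemma lconj_one {R : Subgroup S} (φ : R →* S) : lconj 1 φ = φ := by
  ext u; simp [lconj_apply]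

lemma range_lconj (s : S) {R : Subgroup S} (φ : R →* S) :
    (lconj s φ).range = sconj s φ.range := by
  ext x
  simp only [lconj, MonoidHom.mem_range, MonoidHom.comp_apply, mem_sconj]
  constructor
  · rintro ⟨u, rfl⟩; exact ⟨φ u, ⟨u, rfl⟩, rfl⟩
  · rintro ⟨r, ⟨u, rfl⟩, rfl⟩; exact ⟨u, rfl⟩

/-- Corestriction of `θ` onto its range. -/
def codRes {P : Subgroup S} (θ : P →* S) : P →* θ.range :=
  θ.codRestrict θ.range (fun u => ⟨u, rfl⟩)

lemma codRes_surjective {P : Subgroup S} (θ : P →* S) :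
    Function.Surjective (codRes θ) := by
  rintro ⟨q, u, rfl⟩
  exact ⟨u, rfl⟩

lemma range_comp_of_surjective {P Q : Subgroup S} (ψ : Q →* S) (f : P →* Q)
    (hf : Function.Surjective f) : (ψ.comp f).range = ψ.range := by
  ext x
  simp only [MonoidHom.mem_range, MonoidHom.comp_apply]
  constructor
  · rintro ⟨u, rfl⟩; exact ⟨f u, rfl⟩
  · rintro ⟨q, rfl⟩
    obtain ⟨u, rfl⟩ := hf q
    exact ⟨u, rfl⟩

/-- Composition of good homomorphisms along the range is good. -/
lemma gd_comp (hA : A.Bifree) (hlw : LevelwiseClosed (preFixHom A))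
    {P : Subgroup S} {θ : P →* S} (hθ : Gd A P θ)
    {ψ : θ.range →* S} (hψ : Gd A θ.range ψ) :
    Gd A P (ψ.comp (codRes θ)) := by
  have h1 : θ ∈ preFixHom A P θ.range :=
    (mem_preFix_iff A hA).mpr ⟨fun u => ⟨u, rfl⟩, hθ⟩
  have h2 : ψ ∈ preFixHom A θ.range ψ.range :=
    (mem_preFix_iff A hA).mpr ⟨fun u => ⟨u, rfl⟩, hψ⟩
  have h3 := hlw.2.2 P θ.range ψ.range θ h1 ψ h2 rfl rfl
  exact h3.2.2

/-- The inverse of a good homomorphism, as a homomorphism on its range. -/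
noncomputable def invHom {P : Subgroup S} (θ : P →* S) (hinj : Function.Injective θ) :
    θ.range →* S :=
  P.subtype.comp (MonoidHom.ofInjective hinj).symm.toMonoidHom

lemma invHom_apply {P : Subgroup S} (θ : P →* S) (hinj : Function.Injective θ)
    (u : P) (hq : θ u ∈ θ.range) : invHom θ hinj ⟨θ u, hq⟩ = u := by
  show P.subtype ((MonoidHom.ofInjective hinj).symm ⟨θ u, hq⟩) = u
  have h1 : (⟨θ u, hq⟩ : θ.range) = (MonoidHom.ofInjective hinj) u :=
    Subtype.ext (by rw [MonoidHom.ofInjective_apply])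
  rw [h1, MulEquiv.symm_apply_apply]
  rfl

lemma invHom_mem {P : Subgroup S} (θ : P →* S) (hinj : Function.Injective θ)
    (q : θ.range) : invHom θ hinj q ∈ P :=
  ((MonoidHom.ofInjective hinj).symm q).2

lemma invHom_spec {P : Subgroup S} (θ : P →* S) (hinj : Function.Injective θ)
    (q : θ.range) : θ ⟨invHom θ hinj q, invHom_mem θ hinj q⟩ = q := by
  obtain ⟨u, hu⟩ := codRes_surjective θ q
  rw [← hu]
  have : (codRes θ u : S) = θ u := rfl
  conv_rhs => rw [show (codRes θ u : S) = θ u from rfl]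
  congr 1
  refine Subtype.ext ?_
  show invHom θ hinj (codRes θ u) = (u : S)
  have h2 : codRes θ u = ⟨θ u, ⟨u, rfl⟩⟩ := rfl
  exact (congrArg (invHom θ hinj) h2).trans (invHom_apply θ hinj u _)

lemma range_invHom {P : Subgroup S} (θ : P →* S) (hinj : Function.Injective θ) :
    (invHom θ hinj).range = P := by
  ext x
  constructor
  · rintro ⟨q, rfl⟩
    exact invHom_mem θ hinj q
  · intro hx
    exact ⟨codRes θ ⟨x, hx⟩, invHom_apply θ hinj ⟨x, hx⟩ _⟩

lemma gd_invHom (hA : A.Bifree) (hlw : LevelwiseClosed (preFixHom A))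
    {P : Subgroup S} {θ : P →* S} (hθ : Gd A P θ) :
    Gd A θ.range (invHom θ (fix_injective A hA hθ)) := by
  have hinj := fix_injective A hA hθ
  have h1 : θ ∈ preFixHom A P θ.range :=
    (mem_preFix_iff A hA).mpr ⟨fun u => ⟨u, rfl⟩, hθ⟩
  have h2 := hlw.2.1 P θ.range θ h1 rfl (invHom θ hinj)
    (fun u hq => invHom_apply θ hinj u hq)
  exact h2.2.2

lemma gd_conjHom (hlw : LevelwiseClosed (preFixHom A)) (s : S) (R : Subgroup S) :
    Gd A R (conjHom s R) :=
  (hlw.1 R ⊤ s (fun _ _ => trivial)).2.2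

end Calc
end Stmt12

namespace Stmt12
open BisetAction

section Bij
variable {S : Type*} [Group S] {X : Type*} (A : BisetAction S S X)

instance {P : Subgroup S} [Finite S] : Finite (P →* S) :=
  Finite.of_injective (fun f => (f : P → S)) DFunLike.coe_injective

lemma invHom_eq_of {P : Subgroup S} (θ : P →* S) (hinj : Function.Injective θ)
    (q : θ.range) (v : P) (hv : θ v = (q : S)) : invHom θ hinj q = v := by
  have h1 : q = ⟨θ v, ⟨v, rfl⟩⟩ := Subtype.ext hv.symm
  exact (congrArg (invHom θ hinj) h1).trans (invHom_apply θ hinj v _)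

lemma gd_comp' (hA : A.Bifree) (hlw : LevelwiseClosed (preFixHom A))
    {P Q : Subgroup S} {θ : P →* S} (hθ : Gd A P θ) (hmemQ : ∀ u, θ u ∈ Q)
    (hsurj : θ.range = Q) {ψ : Q →* S} (hψ : Gd A Q ψ) :
    Gd A P (ψ.comp (θ.codRestrict Q hmemQ)) := by
  have h1 : θ ∈ preFixHom A P Q := (mem_preFix_iff A hA).mpr ⟨hmemQ, hθ⟩
  have h2 : ψ ∈ preFixHom A Q ψ.range :=
    (mem_preFix_iff A hA).mpr ⟨fun u => ⟨u, rfl⟩, hψ⟩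
  exact (hlw.2.2 P Q ψ.range θ h1 ψ h2 hsurj rfl).2.2

lemma codRestrict_surjective {P Q : Subgroup S} (θ : P →* S) (hmemQ : ∀ u, θ u ∈ Q)
    (hsurj : θ.range = Q) : Function.Surjective (θ.codRestrict Q hmemQ) := by
  rintro ⟨q, hq⟩
  rw [← hsurj] at hq
  obtain ⟨u, rfl⟩ := hq
  exact ⟨u, rfl⟩

lemma gd_comp_inclusion {R' R : Subgroup S} (h : R' = R) {ψ : R' →* S}
    (hgd : Gd A R' ψ) : Gd A R (ψ.comp (Subgroup.inclusion h.ge)) := by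
  obtain ⟨x, hx⟩ := hgd
  refine ⟨x, fun u => ?_⟩
  have h1 := hx (Subgroup.inclusion h.ge u)
  rwa [Subgroup.coe_inclusion] at h1

lemma inclusion_surjective {R' R : Subgroup S} (h : R' = R) :
    Function.Surjective (Subgroup.inclusion h.ge) := by
  rintro ⟨q, hq⟩
  exact ⟨⟨q, h ▸ hq⟩, rfl⟩

lemma isConj_iff (hA : A.Bifree) {P Q : Subgroup S} :
    (preFixHom A).IsConj P Q ↔ ∃ θ : P →* S, Gd A P θ ∧ θ.range = Q := by
  constructor
  · rintro ⟨φ, hm, hr⟩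
    exact ⟨φ, hm.2.2, hr⟩
  · rintro ⟨θ, hgd, hr⟩
    exact ⟨θ, (mem_preFix_iff A hA).mpr ⟨fun u => hr ▸ ⟨u, rfl⟩, hgd⟩, hr⟩

lemma isConj_symm (hA : A.Bifree) (hlw : LevelwiseClosed (preFixHom A))
    {P Q : Subgroup S} (h : (preFixHom A).IsConj P Q) : (preFixHom A).IsConj Q P := by
  rw [isConj_iff A hA] at h ⊢
  obtain ⟨θ, hgd, hr⟩ := h
  have hinj := fix_injective A hA hgd
  refine ⟨(invHom θ hinj).comp (Subgroup.inclusion hr.ge), ?_, ?_⟩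
  · exact gd_comp_inclusion A hr (gd_invHom A hA hlw hgd)
  · rw [range_comp_of_surjective _ _ (inclusion_surjective hr), range_invHom]

lemma isConj_trans (hA : A.Bifree) (hlw : LevelwiseClosed (preFixHom A))
    {P Q R : Subgroup S} (h1 : (preFixHom A).IsConj P Q)
    (h2 : (preFixHom A).IsConj Q R) : (preFixHom A).IsConj P R := by
  rw [isConj_iff A hA] at h1 h2 ⊢
  obtain ⟨θ, hθ, hrθ⟩ := h1
  obtain ⟨ψ, hψ, hrψ⟩ := h2
  have hmemQ : ∀ u, θ u ∈ Q := fun u => hrθ ▸ ⟨u, rfl⟩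
  refine ⟨ψ.comp (θ.codRestrict Q hmemQ), gd_comp' A hA hlw hθ hmemQ hrθ hψ, ?_⟩
  rw [range_comp_of_surjective _ _ (codRestrict_surjective θ hmemQ hrθ), hrψ]

/-- The set of "good" homomorphisms `P → S` with range `R`. -/
def IsoSet (P R : Subgroup S) : Type _ :=
  {φ : P →* S // Gd A P φ ∧ φ.range = R}

instance {P R : Subgroup S} [Finite S] : Finite (IsoSet A P R) := by
  unfold IsoSet; infer_instance

/-- The swap map `IsoSet P R → IsoSet R P`, `φ ↦ φ⁻¹`. -/
noncomputable def swapFun (hA : A.Bifree) (hlw : LevelwiseClosed (preFixHom A))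
    (P R : Subgroup S) : IsoSet A P R → IsoSet A R P := fun z =>
  ⟨(invHom z.1 (fix_injective A hA z.2.1)).comp (Subgroup.inclusion z.2.2.ge),
    gd_comp_inclusion A z.2.2 (gd_invHom A hA hlw z.2.1),
    by rw [range_comp_of_surjective _ _ (inclusion_surjective z.2.2), range_invHom]⟩

lemma swapFun_swapFun (hA : A.Bifree) (hlw : LevelwiseClosed (preFixHom A))
    (P R : Subgroup S) (z : IsoSet A P R) :
    swapFun A hA hlw R P (swapFun A hA hlw P R z) = z := by
  obtain ⟨φ, hgd, hr⟩ := z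
  have hinjφ := fix_injective A hA hgd
  refine Subtype.ext ?_
  ext u
  have hmemφu : φ u ∈ R := hr ▸ ⟨u, rfl⟩
  refine invHom_eq_of _ _ _ ⟨φ u, hmemφu⟩ ?_
  show invHom φ hinjφ (Subgroup.inclusion hr.ge ⟨φ u, hmemφu⟩) = _
  rw [invHom_eq_of φ hinjφ _ u rfl, Subgroup.coe_inclusion]

lemma card_isoSet_swap (hA : A.Bifree) (hlw : LevelwiseClosed (preFixHom A))
    (P R : Subgroup S) : Nat.card (IsoSet A P R) = Nat.card (IsoSet A R P) := by
  refine Nat.card_eq_of_bijective (swapFun A hA hlw P R) ⟨?_, ?_⟩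
  · intro a b hab
    have := congrArg (swapFun A hA hlw R P) hab
    rwa [swapFun_swapFun, swapFun_swapFun] at this
  · intro ψ
    exact ⟨swapFun A hA hlw R P ψ, swapFun_swapFun A hA hlw R P ψ⟩

/-- the composition bijection: `IsoSet Q R ≃ IsoSet P R` along a good `θ : P → S`
with range `Q`. -/
lemma card_isoSet_comp (hA : A.Bifree) (hlw : LevelwiseClosed (preFixHom A))
    {P Q : Subgroup S} (θ : P →* S) (hθ : Gd A P θ) (hrθ : θ.range = Q)
    (R : Subgroup S) :
    Nat.card (IsoSet A Q R) = Nat.card (IsoSet A P R) := by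
  have hinj := fix_injective A hA hθ
  have hmemQ : ∀ u, θ u ∈ Q := fun u => hrθ ▸ ⟨u, rfl⟩
  have hsurj := codRestrict_surjective θ hmemQ hrθ
  refine Nat.card_eq_of_bijective (fun z =>
    ⟨z.1.comp (θ.codRestrict Q hmemQ), gd_comp' A hA hlw hθ hmemQ hrθ z.2.1,
      by rw [range_comp_of_surjective _ _ hsurj, z.2.2]⟩) ⟨?_, ?_⟩
  · intro a b hab
    have h1 := congrArg Subtype.val hab
    refine Subtype.ext ?_
    ext q
    obtain ⟨u, rfl⟩ := hsurj q
    exact congrArg (fun (f : P →* S) => f u) h1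
  · rintro ⟨φ, hφgd, hφr⟩
    -- candidate : φ ∘ θ⁻¹
    have hmemP : ∀ q : θ.range, invHom θ hinj q ∈ P := invHom_mem θ hinj
    have hmemP' : ∀ q : Q, (invHom θ hinj).comp (Subgroup.inclusion hrθ.ge) q ∈ P :=
      fun q => invHom_mem θ hinj _
    set ι : Q →* S := (invHom θ hinj).comp (Subgroup.inclusion hrθ.ge) with hι
    have hιgd : Gd A Q ι := gd_comp_inclusion A hrθ (gd_invHom A hA hlw hθ)
    have hιr : ι.range = P := by
      rw [hι, range_comp_of_surjective _ _ (inclusion_surjective hrθ), range_invHom]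
    refine ⟨⟨φ.comp (ι.codRestrict P hmemP'), gd_comp' A hA hlw hιgd hmemP' hιr hφgd,
      by rw [range_comp_of_surjective _ _ (codRestrict_surjective ι hmemP' hιr), hφr]⟩, ?_⟩
    refine Subtype.ext ?_
    ext u
    show φ ((ι.codRestrict P hmemP') ((θ.codRestrict Q hmemQ) u)) = φ u
    congr 1
    refine Subtype.ext ?_
    show invHom θ hinj (Subgroup.inclusion hrθ.ge ((θ.codRestrict Q hmemQ) u)) = (u : S)
    rw [invHom_eq_of θ hinj _ u rfl]

/-- conjugation bijection: `IsoSet P R ≃ IsoSet P (sconj s R)`. -/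
lemma card_isoSet_sconj (hA : A.Bifree) (s : S) (P R : Subgroup S) :
    Nat.card (IsoSet A P R) = Nat.card (IsoSet A P (sconj s R)) := by
  refine Nat.card_eq_of_bijective (fun z =>
    ⟨lconj s z.1, gd_lconj A z.2.1, by rw [range_lconj, z.2.2]⟩) ⟨?_, ?_⟩
  · intro a b hab
    have h1 := congrArg Subtype.val hab
    refine Subtype.ext ?_
    have h2 := congrArg (lconj s⁻¹) h1
    rwa [lconj_lconj, lconj_lconj, inv_mul_cancel, lconj_one, lconj_one] at h2
  · rintro ⟨φ, hφgd, hφr⟩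
    refine ⟨⟨lconj s⁻¹ φ, gd_lconj A hφgd, ?_⟩, ?_⟩
    · rw [range_lconj, hφr, sconj_sconj, inv_mul_cancel, sconj_one]
    · refine Subtype.ext ?_
      show lconj s (lconj s⁻¹ φ) = φ
      rw [lconj_lconj, mul_inv_cancel, lconj_one]

end Bij
end Stmt12

namespace Stmt12
open BisetAction

section Lagrange
variable {S : Type*} [Group S] {X : Type*} (A : BisetAction S S X)

lemma subgroup_eq_of_le_of_card_le {G : Type*} [Group G] [Finite G] {H K : Subgroup G}
    (h : H ≤ K) (hc : Nat.card K ≤ Nat.card H) : H = K := by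
  have h2 : (H : Set G) = (K : Set G) := by
    refine Set.eq_of_subset_of_ncard_le h ?_ (Set.toFinite _)
    rwa [← Nat.card_coe_set_eq, ← Nat.card_coe_set_eq]
  exact SetLike.ext' h2

lemma centralizer_le_normalizer' {G : Type*} [Group G] (Q : Subgroup G) :
    Subgroup.centralizer (Q : Set G) ≤ Subgroup.normalizer (Q : Set G) := by
  intro x hx
  rw [Subgroup.mem_centralizer_iff] at hx
  rw [Subgroup.mem_normalizer_iff]
  intro h
  constructor
  · intro hh
    have := hx h hh
    rw [show x * h * x⁻¹ = h from by rw [← this]; group]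
    exact hh
  · intro hh
    have h3 := hx _ hh
    have h5 : x * h = x * (x * h * x⁻¹) := by rw [← h3]; group
    have h4 : h = x * h * x⁻¹ := mul_left_cancel h5
    rw [h4]
    exact hh

variable [Finite S]

/-- range of a hom `Q →* S` which is injective with image inside `Q` is `Q`. -/
lemma range_eq_of_inj_mapsTo {Q : Subgroup S} {φ : Q →* S}
    (hinj : Function.Injective φ) (hmem : ∀ u, φ u ∈ Q) : φ.range = Q := by
  refine subgroup_eq_of_le_of_card_le (fun x hx => ?_) ?_
  · obtain ⟨u, rfl⟩ := hx
    exact hmem u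
  · have h1 : Nat.card φ.range = Nat.card Q :=
      (Nat.card_congr (MonoidHom.ofInjective hinj).toEquiv).symm
    rw [h1]

/-- the embedding of `MulAut Q` into homs `Q →* S`. -/
def jHom (Q : Subgroup S) (α : MulAut Q) : Q →* S := Q.subtype.comp α.toMonoidHom

lemma jHom_injective (Q : Subgroup S) : Function.Injective (jHom Q) := by
  intro α β h
  ext u
  have h' : ((α u : S)) = ((β u : S)) := congrArg (fun (f : Q →* S) => f u) h
  exact h'

lemma jHom_apply (Q : Subgroup S) (α : MulAut Q) (u : Q) : jHom Q α u = ↑(α u) := rfl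

lemma jHom_inj' (Q : Subgroup S) (α : MulAut Q) : Function.Injective (jHom Q α) := by
  intro u v h
  have := α.injective (Subtype.ext (h : ((α u : S)) = α v))
  exact this

lemma jHom_mem (Q : Subgroup S) (α : MulAut Q) (u : Q) : jHom Q α u ∈ Q := (α u).2

lemma range_jHom (Q : Subgroup S) (α : MulAut Q) : (jHom Q α).range = Q :=
  range_eq_of_inj_mapsTo (jHom_inj' Q α) (jHom_mem Q α)

lemma exists_mulAut_of {Q : Subgroup S} (φ : Q →* S) (hinj : Function.Injective φ)
    (hmem : ∀ u, φ u ∈ Q) : ∃ α : MulAut Q, jHom Q α = φ := by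
  have hinj' : Function.Injective (φ.codRestrict Q hmem) := by
    intro u v h
    exact hinj (Subtype.ext_iff.mp h)
  have hbij := Finite.injective_iff_bijective.mp hinj'
  refine ⟨MulEquiv.ofBijective (φ.codRestrict Q hmem) hbij, ?_⟩
  ext u
  rfl

lemma jHom_mul (Q : Subgroup S) (α β : MulAut Q) :
    jHom Q (α * β) = (jHom Q α).comp ((jHom Q β).codRestrict Q (jHom_mem Q β)) := by
  ext u
  rfl

/-- `Aut_C(Q)` as subgroup of `MulAut Q`. -/
def AutC (hA : A.Bifree) (hlw : LevelwiseClosed (preFixHom A)) (Q : Subgroup S) :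
    Subgroup (MulAut Q) where
  carrier := {α | Gd A Q (jHom Q α)}
  one_mem' := by
    have h1 : jHom Q 1 = conjHom 1 Q := by
      ext u
      show ((1 : MulAut Q) u : S) = 1 * u * 1⁻¹
      simp
    rw [Set.mem_setOf, h1]
    exact gd_conjHom A hlw 1 Q
  mul_mem' := by
    intro α β hα hβ
    rw [Set.mem_setOf] at *
    rw [jHom_mul]
    exact gd_comp' A hA hlw hβ (jHom_mem Q β) (range_jHom Q β) hα
  inv_mem' := by
    intro α hα
    rw [Set.mem_setOf] at *
    have h1 : jHom Q α ∈ preFixHom A Q Q :=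
      (mem_preFix_iff A hA).mpr ⟨jHom_mem Q α, hα⟩
    have h2 := hlw.2.1 Q Q (jHom Q α) h1 (range_jHom Q α) (jHom Q α⁻¹) ?_
    · exact h2.2.2
    · intro u hq
      show ((α⁻¹ ⟨↑(α u), _⟩ : Q) : S) = u
      congr 1
      rw [show (⟨↑(α u), hq⟩ : Q) = α u from Subtype.ext rfl]
      exact α.toEquiv.symm_apply_apply u

/-- The conjugation homomorphism `N_S(Q) →* MulAut Q`. -/
def conjF (Q : Subgroup S) : (Subgroup.normalizer (Q : Set S)) →* MulAut Q where
  toFun s :=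
    { toFun := fun u => ⟨(s : S) * u * (s : S)⁻¹,
        (Subgroup.mem_normalizer_iff.mp s.2 u).mp u.2⟩
      invFun := fun u => ⟨(s : S)⁻¹ * u * (s : S),
        by
          have := (Subgroup.mem_normalizer_iff.mp ((Subgroup.normalizer (Q : Set S)).inv_mem s.2) u).mp u.2
          simpa using this⟩
      left_inv := fun u => by
        refine Subtype.ext ?_
        show (s : S)⁻¹ * ((s : S) * u * (s:S)⁻¹) * s = (u : S)
        group
      right_inv := fun u => by
        refine Subtype.ext ?_
        show (s : S) * ((s : S)⁻¹ * u * (s:S)) * (s:S)⁻¹ = (u : S)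
        group
      map_mul' := fun u v => by
        refine Subtype.ext ?_
        show (s:S) * (↑u * ↑v) * (s:S)⁻¹ = ((s:S) * u * (s:S)⁻¹) * ((s:S) * v * (s:S)⁻¹)
        group }
  map_one' := by
    refine MulEquiv.ext fun u => Subtype.ext ?_
    show (1 : S) * u * (1 : S)⁻¹ = (u : S)
    group
  map_mul' s t := by
    refine MulEquiv.ext fun u => Subtype.ext ?_
    show ((s*t : (Subgroup.normalizer (Q : Set S))) : S) * u * ((s*t : (Subgroup.normalizer (Q : Set S))) : S)⁻¹
      = (s : S) * ((t : S) * u * (t : S)⁻¹) * (s : S)⁻¹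
    push_cast
    group

lemma jHom_conjF (Q : Subgroup S) (s : (Subgroup.normalizer (Q : Set S))) :
    jHom Q (conjF Q s) = conjHom (s : S) Q := by
  ext u
  rfl

lemma range_conjF (Q : Subgroup S) (α : MulAut Q) :
    α ∈ (conjF Q).range ↔ jHom Q α ∈ autSSet Q := by
  constructor
  · rintro ⟨s, rfl⟩
    exact ⟨s, s.2, (jHom_conjF Q s).symm⟩
  · rintro ⟨s, hs, hj⟩
    refine ⟨⟨s, hs⟩, jHom_injective Q ?_⟩
    rw [jHom_conjF, hj]

lemma ker_conjF (Q : Subgroup S) :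
    (conjF Q).ker = (Subgroup.centralizer (Q : Set S)).subgroupOf (Subgroup.normalizer (Q : Set S)) := by
  ext s
  rw [MonoidHom.mem_ker, Subgroup.mem_subgroupOf, Subgroup.mem_centralizer_iff]
  constructor
  · intro h g hg
    have h2 := congrArg (fun (α : MulAut Q) => (α ⟨g, hg⟩ : S)) h
    have h3 : (s : S) * g * (s : S)⁻¹ = g := h2
    calc g * s = (s : S) * g * (s:S)⁻¹ * s := by rw [h3]
    _ = (s : S) * g := by group
  · intro h
    refine MulEquiv.ext fun u => Subtype.ext ?_
    show (s : S) * u * (s : S)⁻¹ = (u : S)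
    have := h u u.2
    rw [show (s:S) * u * (s:S)⁻¹ = (u : S) * s * (s : S)⁻¹ from by rw [← this], mul_inv_cancel_right]

lemma card_ker_conjF (Q : Subgroup S) :
    Nat.card (conjF Q).ker = Nat.card (Subgroup.centralizer (Q : Set S)) := by
  rw [ker_conjF]
  refine Nat.card_eq_of_bijective (fun z => ⟨z.1.1, Subgroup.mem_subgroupOf.mp z.2⟩) ⟨?_, ?_⟩
  · intro a b hab
    have h' := congrArg (fun (z : Subgroup.centralizer (Q : Set S)) => (z : S)) hab
    exact Subtype.ext (Subtype.ext h')
  · rintro ⟨c, hc⟩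
    exact ⟨⟨⟨c, centralizer_le_normalizer' Q hc⟩, Subgroup.mem_subgroupOf.mpr hc⟩, rfl⟩

lemma card_normalizer_eq (Q : Subgroup S) :
    Nat.card (Subgroup.normalizer (Q : Set S))
      = Nat.card (autSSet Q) * Nat.card (Subgroup.centralizer (Q : Set S)) := by
  have h1 : Nat.card (Subgroup.normalizer (Q : Set S))
      = Nat.card ((Subgroup.normalizer (Q : Set S)) ⧸ (conjF Q).ker) * Nat.card (conjF Q).ker :=
    Subgroup.card_eq_card_quotient_mul_card_subgroup _
  have h2 : Nat.card ((Subgroup.normalizer (Q : Set S)) ⧸ (conjF Q).ker) = Nat.card (conjF Q).range :=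
    Nat.card_congr (QuotientGroup.quotientKerEquivRange (conjF Q)).toEquiv
  have h3 : Nat.card (conjF Q).range = Nat.card (autSSet Q) := by
    refine Nat.card_eq_of_bijective
      (fun z => ⟨jHom Q z.1, (range_conjF Q z.1).mp z.2⟩) ⟨?_, ?_⟩
    · intro a b hab
      have h' : jHom Q (a : MulAut Q) = jHom Q (b : MulAut Q) :=
        congrArg (fun (z : {f : Q →* S // f ∈ autSSet Q}) => z.1) hab
      exact Subtype.ext (jHom_injective Q h')
    · rintro ⟨φ, hφ⟩
      obtain ⟨s, hs, rfl⟩ := hφ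
      exact ⟨⟨conjF Q ⟨s, hs⟩, ⟨⟨s, hs⟩, rfl⟩⟩, Subtype.ext (jHom_conjF Q ⟨s, hs⟩)⟩
  rw [h1, h2, h3, card_ker_conjF]

/-- `Aut_S(Q) ≤ Aut_C(Q)` inside `MulAut Q`. -/
lemma range_conjF_le_AutC (hA : A.Bifree) (hlw : LevelwiseClosed (preFixHom A))
    (Q : Subgroup S) : (conjF Q).range ≤ AutC A hA hlw Q := by
  rintro α ⟨s, rfl⟩
  show Gd A Q (jHom Q (conjF Q s))
  rw [jHom_conjF]
  exact gd_conjHom A hlw (s : S) Q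

lemma card_autSSet_dvd (hA : A.Bifree) (hlw : LevelwiseClosed (preFixHom A))
    (Q : Subgroup S) : Nat.card (autSSet Q) ∣ Nat.card (IsoSet A Q Q) := by
  have h1 : Nat.card (conjF Q).range ∣ Nat.card (AutC A hA hlw Q) :=
    Subgroup.card_dvd_of_le (range_conjF_le_AutC A hA hlw Q)
  have h3 : Nat.card (conjF Q).range = Nat.card (autSSet Q) := by
    refine Nat.card_eq_of_bijective
      (fun z => ⟨jHom Q z.1, (range_conjF Q z.1).mp z.2⟩) ⟨?_, ?_⟩
    · intro a b hab
      have h' : jHom Q (a : MulAut Q) = jHom Q (b : MulAut Q) :=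
        congrArg (fun (z : {f : Q →* S // f ∈ autSSet Q}) => z.1) hab
      exact Subtype.ext (jHom_injective Q h')
    · rintro ⟨φ, hφ⟩
      obtain ⟨s, hs, rfl⟩ := hφ
      exact ⟨⟨conjF Q ⟨s, hs⟩, ⟨⟨s, hs⟩, rfl⟩⟩, Subtype.ext (jHom_conjF Q ⟨s, hs⟩)⟩
  have h4 : Nat.card (AutC A hA hlw Q) = Nat.card (IsoSet A Q Q) := by
    refine Nat.card_eq_of_bijective
      (fun z => ⟨jHom Q z.1, z.2, range_jHom Q z.1⟩) ⟨?_, ?_⟩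
    · intro a b hab
      have h' : jHom Q (a : MulAut Q) = jHom Q (b : MulAut Q) := congrArg Subtype.val hab
      exact Subtype.ext (jHom_injective Q h')
    · rintro ⟨φ, hgd, hr⟩
      obtain ⟨α, rfl⟩ := exists_mulAut_of φ (fix_injective A hA hgd)
        (fun u => hr.le ⟨u, rfl⟩)
      exact ⟨⟨α, hgd⟩, rfl⟩
  rw [← h3, ← h4]
  exact h1

/-- `|Hom_C(Q,Q)| = |IsoSet Q Q|`. -/
lemma card_CQQ_eq (hA : A.Bifree) (Q : Subgroup S) :
    Nat.card (preFixHom A Q Q) = Nat.card (IsoSet A Q Q) := by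
  refine Nat.card_eq_of_bijective (fun z => ⟨z.1, z.2.2.2, ?_⟩) ⟨?_, ?_⟩
  · exact range_eq_of_inj_mapsTo z.2.1 z.2.2.1
  · intro a b hab
    have h' := congrArg (fun (z : IsoSet A Q Q) => z.1) hab
    exact Subtype.ext h'
  · rintro ⟨φ, hgd, hr⟩
    exact ⟨⟨φ, fix_injective A hA hgd, fun u => hr.le ⟨u, rfl⟩, hgd⟩, rfl⟩

end Lagrange
end Stmt12

namespace Stmt12
open BisetAction

section Engine
variable {S : Type*} [Group S] {X : Type*} (A : BisetAction S S X)

/-- `S`-conjugacy of subgroups. -/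
def SRel (R R' : Subgroup S) : Prop := ∃ s : S, sconj s R = R'

lemma srel_refl (R : Subgroup S) : SRel R R := ⟨1, sconj_one R⟩

lemma srel_symm {R R' : Subgroup S} (h : SRel R R') : SRel R' R := by
  obtain ⟨s, rfl⟩ := h
  exact ⟨s⁻¹, by rw [sconj_sconj, inv_mul_cancel, sconj_one]⟩

lemma srel_trans {R R' R'' : Subgroup S} (h : SRel R R') (h' : SRel R' R'') :
    SRel R R'' := by
  obtain ⟨s, rfl⟩ := h
  obtain ⟨t, rfl⟩ := h'
  exact ⟨t * s, (sconj_sconj t s R).symm⟩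

/-- The setoid of `S`-conjugacy on subgroups. -/
def srelSetoid (S : Type*) [Group S] : Setoid (Subgroup S) :=
  ⟨SRel, ⟨srel_refl, srel_symm, srel_trans⟩⟩

/-- The point set `Y_{P,R}`: points whose stabilizer morphism on `P` is total with
range `S`-conjugate to `R`. -/
def YSet (P R : Subgroup S) : Set X :=
  {x | ∃ φ : P →* S, x ∈ A.Fix P φ ∧ SRel φ.range R}

/-- image of a set of points in the left-orbit space. -/
def imgL (Y : Set X) : Set (A.leftOrbits) := {ℓ | ∃ x ∈ Y, mkL A x = ℓ}

lemma ySet_invariant {P R : Subgroup S} {x : X} (hx : x ∈ YSet A P R) (s : S) :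
    A.smul s x ∈ YSet A P R := by
  obtain ⟨φ, hfix, hrel⟩ := hx
  exact ⟨lconj s φ, smul_mem_fix A hfix,
    by rw [range_lconj]; exact srel_trans (srel_symm ⟨s, rfl⟩) hrel⟩

variable [Finite S] [Finite X]

lemma card_top_subgroup : Nat.card ((⊤ : Subgroup S) : Type _) = Nat.card S :=
  Nat.card_congr Subgroup.topEquiv.toEquiv

/-- |Y_{P,R}| = |S| ⬝ t_R. -/
lemma card_ySet_orbits (hA : A.Bifree) (P R : Subgroup S) :
    Nat.card (YSet A P R) = Nat.card S * Nat.card (imgL A (YSet A P R)) := by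
  rw [← card_top_subgroup (S := S)]
  exact card_set_eq A hA (YSet A P R) ⊤
    (fun x hx s => iff_of_true (ySet_invariant A hx s) trivial)

/-- |Y_{P,R}| = (number of good `φ` with range conjugate to `R`) ⬝ c. -/
lemma card_ySet_fibers (hA : A.Bifree) (P R : Subgroup S) (c : ℕ)
    (hc : ∀ φ : P →* S, Gd A P φ → Nat.card (A.Fix P φ) = c) :
    Nat.card (YSet A P R)
      = Nat.card {φ : P →* S // Gd A P φ ∧ SRel φ.range R} * c := by
  classical
  have hmap : ∀ z : YSet A P R, PClosed A P z.1 := by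
    rintro ⟨x, φ, hfix, hrel⟩
    exact pclosed_of_mem_fix A hfix
  set g : YSet A P R → {φ : P →* S // Gd A P φ ∧ SRel φ.range R} := fun z =>
    ⟨sigHom A hA P z.1 (hmap z), ⟨z.1, mem_fix_sigHom A hA P z.1 (hmap z)⟩, by
      obtain ⟨x, hx⟩ := z
      obtain ⟨φ, hfix, hrel⟩ := hx
      rw [fix_eq_sigHom_val A hA hfix]
      exact hrel⟩ with hg
  refine card_eq_card_mul_of_fiber_const g c (fun b => ?_)
  rw [← hc b.1 b.2.1]
  refine Nat.card_eq_of_bijective (fun z => ⟨z.1.1, ?_⟩) ⟨?_, ?_⟩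
  · have h1 : sigHom A hA P z.1.1 (hmap z.1) = b.1 := congrArg Subtype.val z.2
    rw [← h1]
    exact mem_fix_sigHom A hA P z.1.1 (hmap z.1)
  · intro a₁ b₁ hab
    have h' := congrArg (fun (w : (A.Fix P b.1 : Set X)) => (w : X)) hab
    exact Subtype.ext (Subtype.ext h')
  · intro y
    have hy : (y : X) ∈ YSet A P R := ⟨b.1, y.2, b.2.2⟩
    exact ⟨⟨⟨y.1, hy⟩, Subtype.ext (fix_eq_sigHom_val A hA y.2 (hmap ⟨y.1, hy⟩))⟩,
      Subtype.ext rfl⟩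

/-- number of good `φ` with range conjugate to `R` = (orbit of `R`) ⬝ |IsoSet P R|. -/
lemma card_good_eq (hA : A.Bifree) (P R : Subgroup S) :
    Nat.card {φ : P →* S // Gd A P φ ∧ SRel φ.range R}
      = Nat.card {R' : Subgroup S // SRel R R'} * Nat.card (IsoSet A P R) := by
  classical
  set g : {φ : P →* S // Gd A P φ ∧ SRel φ.range R} → {R' : Subgroup S // SRel R R'} :=
    fun z => ⟨z.1.range, srel_symm z.2.2⟩ with hg
  refine card_eq_card_mul_of_fiber_const g _ (fun b => ?_)
  have h1 : Nat.card (IsoSet A P b.1) = Nat.card (IsoSet A P R) := by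
    obtain ⟨s, hs⟩ := srel_symm b.2
    have h2 := card_isoSet_sconj A hA s P b.1
    rw [hs] at h2
    exact h2
  rw [← h1]
  refine Nat.card_eq_of_bijective
    (fun z => ⟨z.1.1, z.1.2.1, congrArg Subtype.val z.2⟩) ⟨?_, ?_⟩
  · intro a₁ b₁ hab
    have h2 := congrArg (fun (w : IsoSet A P b.1) => w.1) hab
    exact Subtype.ext (Subtype.ext h2)
  · rintro ⟨φ, hgd, hr⟩
    refine ⟨⟨⟨φ, hgd, ?_⟩, Subtype.ext hr⟩, rfl⟩
    rw [hr]
    exact srel_symm b.2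

/-- orbit–stabilizer for conjugation of subgroups. -/
lemma card_orbit_mul_card_normalizer (R : Subgroup S) :
    Nat.card {R' : Subgroup S // SRel R R'} * Nat.card (Subgroup.normalizer (R : Set S)) = Nat.card S := by
  classical
  refine ((card_eq_card_mul_of_fiber_const
    (fun s : S => (⟨sconj s R, ⟨s, rfl⟩⟩ : {R' : Subgroup S // SRel R R'}))
    (Nat.card (Subgroup.normalizer (R : Set S))) (fun b => ?_)).symm)
  obtain ⟨R', hR'⟩ := b
  obtain ⟨s₀, hs₀⟩ := hR'
  refine Nat.card_eq_of_bijective (fun z => ⟨s₀⁻¹ * z.1, ?_⟩) ⟨?_, ?_⟩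
  · have hz : sconj z.1 R = R' := congrArg Subtype.val z.2
    rw [← sconj_eq_self_iff (s := s₀⁻¹ * z.1)]
    rw [← sconj_sconj, hz, ← hs₀, sconj_sconj, inv_mul_cancel, sconj_one]
  · intro a₁ b₁ hab
    have h2 := congrArg Subtype.val hab
    exact Subtype.ext (by
      have h3 : s₀⁻¹ * a₁.1 = s₀⁻¹ * b₁.1 := h2
      exact mul_left_cancel h3)
  · rintro ⟨n, hn⟩
    refine ⟨⟨s₀ * n, ?_⟩, ?_⟩
    · refine Subtype.ext ?_
      show sconj (s₀ * n) R = R'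
      rw [← sconj_sconj, sconj_eq_self_iff.mpr hn, hs₀]
    · refine Subtype.ext ?_
      show s₀⁻¹ * (s₀ * n) = n
      group
  
/-- The key identity: `t_R ⬝ |N_S(R)| = |IsoSet P R| ⬝ c`. -/
lemma key_identity (hA : A.Bifree) (P R : Subgroup S) (c : ℕ)
    (hc : ∀ φ : P →* S, Gd A P φ → Nat.card (A.Fix P φ) = c) :
    Nat.card (imgL A (YSet A P R)) * Nat.card (Subgroup.normalizer (R : Set S))
      = Nat.card (IsoSet A P R) * c := by
  have h1 := card_ySet_orbits A hA P R
  have h2 := card_ySet_fibers A hA P R c hc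
  have h3 := card_good_eq A hA P R
  have h4 := card_orbit_mul_card_normalizer (S := S) R
  have h5 : Nat.card {R' : Subgroup S // SRel R R'} *
      (Nat.card (imgL A (YSet A P R)) * Nat.card (Subgroup.normalizer (R : Set S)))
      = Nat.card {R' : Subgroup S // SRel R R'} * (Nat.card (IsoSet A P R) * c) := by
    calc Nat.card {R' : Subgroup S // SRel R R'} *
        (Nat.card (imgL A (YSet A P R)) * Nat.card (Subgroup.normalizer (R : Set S)))
        = (Nat.card {R' : Subgroup S // SRel R R'} * Nat.card (Subgroup.normalizer (R : Set S))) *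
          Nat.card (imgL A (YSet A P R)) := by ring
      _ = Nat.card S * Nat.card (imgL A (YSet A P R)) := by rw [h4]
      _ = Nat.card (YSet A P R) := h1.symm
      _ = Nat.card {φ : P →* S // Gd A P φ ∧ SRel φ.range R} * c := h2
      _ = Nat.card {R' : Subgroup S // SRel R R'} * (Nat.card (IsoSet A P R) * c) := by
          rw [h3]; ring
  have hpos : Nat.card {R' : Subgroup S // SRel R R'} ≠ 0 := by
    have : Nonempty {R' : Subgroup S // SRel R R'} := ⟨⟨R, srel_refl R⟩⟩
    exact Nat.card_ne_zero.mpr ⟨this, inferInstance⟩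
  exact Nat.eq_of_mul_eq_mul_left (Nat.pos_of_ne_zero hpos) h5

end Engine
end Stmt12

namespace Stmt12
open BisetAction

section Engine2
variable {S : Type*} [Group S] {X : Type*} (A : BisetAction S S X)

lemma pclosed_smul {P : Subgroup S} (hA : A.Bifree) {x : X} (s : S)
    (h : PClosed A P x) : PClosed A P (A.smul s x) :=
  pclosed_of_mem_fix A (smul_mem_fix A (mem_fix_sigHom A hA P x h))

open Classical in
/-- The range of the stabilizer morphism (or `⊥`). -/
noncomputable def rangeOf (hA : A.Bifree) (P : Subgroup S) (x : X) : Subgroup S :=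
  if h : PClosed A P x then (sigHom A hA P x h).range else ⊥

lemma rangeOf_eq (hA : A.Bifree) {P : Subgroup S} {φ : P →* S} {x : X}
    (h : x ∈ A.Fix P φ) : rangeOf A hA P x = φ.range := by
  rw [rangeOf, dif_pos (pclosed_of_mem_fix A h), fix_eq_sigHom_val A hA h]

lemma rangeOf_smul (hA : A.Bifree) {P : Subgroup S} {x : X} (s : S)
    (h : PClosed A P x) : rangeOf A hA P (A.smul s x) = sconj s (rangeOf A hA P x) := by
  have h1 : x ∈ A.Fix P (sigHom A hA P x h) := mem_fix_sigHom A hA P x h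
  have h2 : A.smul s x ∈ A.Fix P (lconj s (sigHom A hA P x h)) := smul_mem_fix A h1
  rw [rangeOf_eq A hA h2, range_lconj, rangeOf, dif_pos h]

/-- The class map on orbits. -/
noncomputable def clsL (hA : A.Bifree) (P : Subgroup S) :
    A.leftOrbits → Quotient (srelSetoid S) :=
  Quotient.lift (fun x => Quotient.mk (srelSetoid S) (rangeOf A hA P x)) (by
    rintro x y ⟨h, rfl⟩
    by_cases hx : PClosed A P x
    · refine Quotient.sound ?_
      rw [rangeOf_smul A hA h hx]
      exact ⟨h, rfl⟩
    · have hy : ¬ PClosed A P (A.smul h x) := by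
        intro hy
        have := pclosed_smul A hA h⁻¹ hy
        rw [A.smul_smul, inv_mul_cancel, A.one_smul] at this
        exact hx this
      show Quotient.mk (srelSetoid S) (rangeOf A hA P x)
        = Quotient.mk (srelSetoid S) (rangeOf A hA P (A.smul h x))
      rw [rangeOf, dif_neg hx, rangeOf, dif_neg hy])

lemma clsL_mk (hA : A.Bifree) (P : Subgroup S) (x : X) :
    clsL A hA P (mkL A x) = Quotient.mk (srelSetoid S) (rangeOf A hA P x) := rfl

lemma pfixed_mk_iff (hA : A.Bifree) {P : Subgroup S} {x : X} :
    PFixed A P (mkL A x) ↔ PClosed A P x := by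
  constructor
  · intro h u
    have h1 : mkL A (A.rmul x u) = mkL A x := h u
    obtain ⟨s, hs⟩ := (mkL_eq_iff A).mp h1.symm
    exact ⟨s, hs⟩
  · intro h u
    obtain ⟨s, hs⟩ := h u
    rw [rmulL_mk, hs, mkL_smul]

/-- Characterization of the fibers of the class map over fixed orbits. -/
lemma pfixed_cls_iff (hA : A.Bifree) (P R : Subgroup S) (ℓ : A.leftOrbits) :
    (PFixed A P ℓ ∧ clsL A hA P ℓ = Quotient.mk (srelSetoid S) R)
      ↔ ℓ ∈ imgL A (YSet A P R) := by
  induction ℓ using Quotient.inductionOn with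
  | h x =>
  have hmk : (Quotient.mk (A.leftOrbitSetoid) x) = mkL A x := rfl
  rw [hmk]
  constructor
  · rintro ⟨hfix, hcls⟩
    have hx : PClosed A P x := (pfixed_mk_iff A hA).mp hfix
    have h2 : SRel (rangeOf A hA P x) R := Quotient.exact hcls
    rw [rangeOf, dif_pos hx] at h2
    exact ⟨x, ⟨sigHom A hA P x hx, mem_fix_sigHom A hA P x hx, h2⟩, rfl⟩
  · rintro ⟨x', ⟨φ, hfixφ, hrel⟩, hmk'⟩
    have hx' : PClosed A P x' := pclosed_of_mem_fix A hfixφ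
    constructor
    · rw [← hmk']
      exact (pfixed_mk_iff A hA).mpr hx'
    · rw [← hmk', clsL_mk, rangeOf_eq A hA hfixφ]
      exact Quotient.sound hrel

variable [Finite S] [Finite X]

lemma card_X_eq (hA : A.Bifree) :
    Nat.card X = Nat.card S * Nat.card (A.leftOrbits) := by
  have h1 := card_set_eq A hA Set.univ ⊤
    (fun x hx s => iff_of_true trivial trivial)
  have h2 : Nat.card (Set.univ : Set X) = Nat.card X :=
    Nat.card_congr (Equiv.Set.univ X)
  have h3 : Nat.card {ℓ : A.leftOrbits // ∃ x ∈ (Set.univ : Set X), mkL A x = ℓ}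
      = Nat.card (A.leftOrbits) := by
    refine Nat.card_congr (Equiv.subtypeUnivEquiv ?_)
    intro ℓ
    obtain ⟨x, hx⟩ := mkL_surjective A ℓ
    exact ⟨x, trivial, hx⟩
  rw [← h2, h1, h3, card_top_subgroup]

lemma not_dvd_card_L {p : ℕ} (hA : A.Bifree)
    (hcard : ¬ p ∣ Nat.card X / Nat.card S) : ¬ p ∣ Nat.card (A.leftOrbits) := by
  have h1 : Nat.card X / Nat.card S = Nat.card (A.leftOrbits) := by
    rw [card_X_eq A hA]
    exact Nat.mul_div_cancel_left _ Nat.card_pos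
  rwa [h1] at hcard

/-- `|X^{(P,φ)}| = |C_S(φ(P))| ⬝ #orbits meeting the fixed-point set`. -/
lemma card_fix_eq (hA : A.Bifree) {P : Subgroup S} (φ : P →* S) (hgd : Gd A P φ) :
    Nat.card (A.Fix P φ)
      = Nat.card (Subgroup.centralizer ((φ.range : Subgroup S) : Set S))
        * Nat.card (imgL A (A.Fix P φ)) := by
  refine card_set_eq A hA (A.Fix P φ) (Subgroup.centralizer (φ.range : Set S))
    (fun x hx s => ?_)
  constructor
  · intro hs
    have h1 : A.smul s x ∈ A.Fix P (lconj s φ) := smul_mem_fix A hx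
    have h2 : lconj s φ = φ := fix_unique A hA h1 hs
    rw [Subgroup.mem_centralizer_iff]
    rintro g ⟨u, rfl⟩
    have h3 : s * φ u * s⁻¹ = φ u := by
      have := congrArg (fun (f : P →* S) => f u) h2
      exact this
    calc φ u * s = s * φ u * s⁻¹ * s := by rw [h3]
      _ = s * φ u := by group
  · intro hs
    intro u
    rw [A.smul_rmul, hx u, A.smul_smul, A.smul_smul]
    congr 1
    have := Subgroup.mem_centralizer_iff.mp hs (φ u) ⟨u, rfl⟩
    exact this.symm

/-- Existence of a conjugate `R` whose orbit-class count is prime to `p`. -/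
lemma exists_good_R {p : ℕ} (hp : p.Prime) (hS : IsPGroup p S) (hA : A.Bifree)
    (hcard : ¬ p ∣ Nat.card X / Nat.card S) (P : Subgroup S) :
    ∃ R : Subgroup S, (preFixHom A).IsConj P R
      ∧ ¬ p ∣ Nat.card (imgL A (YSet A P R)) := by
  classical
  by_contra hcon
  push_neg at hcon
  have hdvd : p ∣ Nat.card {ℓ : A.leftOrbits // PFixed A P ℓ} := by
    refine dvd_card_of_dvd_fibers (fun z => clsL A hA P z.1) p (fun b => ?_)
    rcases isEmpty_or_nonempty {a : {ℓ : A.leftOrbits // PFixed A P ℓ} //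
        (fun z => clsL A hA P z.1) a = b} with he | hne
    · rw [Nat.card_of_isEmpty]
      exact dvd_zero p
    · obtain ⟨⟨⟨ℓ₀, hfix₀⟩, hcls₀⟩⟩ := hne
      have hcls₀' : clsL A hA P ℓ₀ = b := hcls₀
      obtain ⟨x₀, hx₀⟩ := mkL_surjective A ℓ₀
      have hxcl : PClosed A P x₀ := (pfixed_mk_iff A hA).mp (hx₀ ▸ hfix₀)
      have hbR : b = Quotient.mk (srelSetoid S) (sigHom A hA P x₀ hxcl).range := by
        rw [← hcls₀', ← hx₀, clsL_mk, rangeOf, dif_pos hxcl]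
      have hconj : (preFixHom A).IsConj P ((sigHom A hA P x₀ hxcl).range) :=
        (isConj_iff A hA).mpr ⟨sigHom A hA P x₀ hxcl,
          ⟨x₀, mem_fix_sigHom A hA P x₀ hxcl⟩, rfl⟩
      have hcardeq : Nat.card {a : {ℓ : A.leftOrbits // PFixed A P ℓ} //
          (fun z => clsL A hA P z.1) a = b}
          = Nat.card (imgL A (YSet A P ((sigHom A hA P x₀ hxcl).range))) := by
        refine Nat.card_eq_of_bijective (fun z => ⟨z.1.1,
          (pfixed_cls_iff A hA P _ z.1.1).mp ⟨z.1.2, ?_⟩⟩) ⟨?_, ?_⟩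
        · have hz2 : clsL A hA P z.1.1 = b := z.2
          exact hz2.trans hbR
        · intro a₁ b₁ hab
          have h' := congrArg (fun (w : (imgL A (YSet A P
            ((sigHom A hA P x₀ hxcl).range)) : Set (A.leftOrbits))) =>
            (w : A.leftOrbits)) hab
          exact Subtype.ext (Subtype.ext h')
        · rintro ⟨ℓ, hℓ⟩
          have h2 := (pfixed_cls_iff A hA P _ ℓ).mpr hℓ
          exact ⟨⟨⟨ℓ, h2.1⟩, (h2.2.trans hbR.symm : _)⟩, rfl⟩
      rw [hcardeq]
      exact hcon _ hconj
  have hmod := card_pfixed_modEq A hp hS P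
  have hfin : p ∣ Nat.card (A.leftOrbits) := by
    have h1 : Nat.card {ℓ : A.leftOrbits // PFixed A P ℓ} % p = 0 :=
      Nat.mod_eq_zero_of_dvd hdvd
    rw [Nat.ModEq, h1] at hmod
    exact Nat.dvd_of_mod_eq_zero hmod.symm
  exact not_dvd_card_L A hA hcard hfin

end Engine2
end Stmt12

namespace Stmt12
open BisetAction

section Final
variable {S : Type*} [Group S] {X : Type*} (A : BisetAction S S X)
variable {p : ℕ}

lemma card_subgroup_pow [Finite S] (hp : p.Prime) (hS : IsPGroup p S) (H : Subgroup S) :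
    ∃ n : ℕ, Nat.card H = p ^ n := by
  classical
  haveI : Fact p.Prime := ⟨hp⟩
  exact (IsPGroup.iff_card (p := p) (G := H)).mp (hS.to_subgroup H)

lemma conjHom_injective (s : S) (R : Subgroup S) :
    Function.Injective (conjHom s R) := by
  intro u v h
  have h1 : s * u * s⁻¹ = s * v * s⁻¹ := h
  have h2 := mul_right_cancel h1
  exact Subtype.ext (mul_left_cancel h2)

lemma autSSet_subset (hA : A.Bifree) (hlw : LevelwiseClosed (preFixHom A))
    (Q : Subgroup S) : autSSet Q ⊆ preFixHom A Q Q := by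
  rintro φ ⟨s, hs, rfl⟩
  refine (mem_preFix_iff A hA).mpr ⟨?_, gd_conjHom A hlw s Q⟩
  intro u
  exact (Subgroup.mem_normalizer_iff.mp hs u).mp u.2

lemma autSSet_nonempty (Q : Subgroup S) : (autSSet Q).Nonempty :=
  ⟨conjHom 1 Q, 1, (Subgroup.normalizer (Q : Set S)).one_mem, rfl⟩

variable [Finite S] [Finite X]

lemma centralizer_dvd_c (hA : A.Bifree) (hlw : LevelwiseClosed (preFixHom A))
    {P Q : Subgroup S} (c : ℕ)
    (hc : ∀ φ : P →* S, Gd A P φ → Nat.card (A.Fix P φ) = c)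
    (hQ : (preFixHom A).IsConj P Q) :
    Nat.card (Subgroup.centralizer (Q : Set S)) ∣ c := by
  obtain ⟨θ, hθ, hrθ⟩ := (isConj_iff A hA).mp hQ
  have h1 := card_fix_eq A hA θ hθ
  rw [hc θ hθ, hrθ] at h1
  exact Dvd.intro _ h1.symm

/-- The crucial decomposition at a conjugate `Q` with `p ∤ t_Q`. -/
lemma crucial (hp : p.Prime) (hA : A.Bifree) (hlw : LevelwiseClosed (preFixHom A))
    {P Q : Subgroup S} (c : ℕ)
    (hc : ∀ φ : P →* S, Gd A P φ → Nat.card (A.Fix P φ) = c)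
    (hQ : (preFixHom A).IsConj P Q)
    (ht : ¬ p ∣ Nat.card (imgL A (YSet A P Q))) :
    ∃ k c' : ℕ, ¬ p ∣ k ∧ ¬ p ∣ c'
      ∧ Nat.card (IsoSet A Q Q) = k * Nat.card (autSSet Q)
      ∧ c = Nat.card (Subgroup.centralizer (Q : Set S)) * c' := by
  obtain ⟨θ, hθ, hrθ⟩ := (isConj_iff A hA).mp hQ
  have k1 := key_identity A hA P Q c hc
  have hcomp := card_isoSet_comp A hA hlw θ hθ hrθ Q
  have hF4 := card_normalizer_eq (S := S) Q
  obtain ⟨k, hk⟩ := card_autSSet_dvd A hA hlw Q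
  obtain ⟨c', hc'⟩ := centralizer_dvd_c A hA hlw c hc hQ
  -- t_Q * (e * C) = (e * k) * (C * c')
  have h5 : Nat.card (imgL A (YSet A P Q)) *
      (Nat.card (autSSet Q) * Nat.card (Subgroup.centralizer (Q : Set S)))
      = (Nat.card (autSSet Q) * k) *
        (Nat.card (Subgroup.centralizer (Q : Set S)) * c') := by
    rw [← hF4, ← hc', k1, ← hcomp, hk]
  have hepos : 0 < Nat.card (autSSet Q) := by
    have : Nonempty (autSSet Q) := (autSSet_nonempty Q).to_subtype
    exact Nat.card_pos
  have hcpos : 0 < Nat.card (Subgroup.centralizer (Q : Set S)) := Nat.card_pos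
  have h6 : Nat.card (imgL A (YSet A P Q)) = k * c' := by
    have h7 : (Nat.card (autSSet Q) * Nat.card (Subgroup.centralizer (Q : Set S))) *
        Nat.card (imgL A (YSet A P Q))
        = (Nat.card (autSSet Q) * Nat.card (Subgroup.centralizer (Q : Set S))) *
          (k * c') := by
      calc (Nat.card (autSSet Q) * Nat.card (Subgroup.centralizer (Q : Set S))) *
          Nat.card (imgL A (YSet A P Q))
          = Nat.card (imgL A (YSet A P Q)) *
            (Nat.card (autSSet Q) * Nat.card (Subgroup.centralizer (Q : Set S))) := by ring
        _ = (Nat.card (autSSet Q) * k) *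
            (Nat.card (Subgroup.centralizer (Q : Set S)) * c') := h5
        _ = (Nat.card (autSSet Q) * Nat.card (Subgroup.centralizer (Q : Set S))) *
            (k * c') := by ring
    exact Nat.eq_of_mul_eq_mul_left (Nat.mul_pos hepos hcpos) h7
  rw [h6] at ht
  refine ⟨k, c', fun h => ht (h.mul_right c'), fun h => ht (h.mul_left k),
    by rw [hk]; ring, hc'⟩

/-- `p ∤ t_Q` for a fully normalized conjugate `Q`. -/
lemma tQ_of_fullyNormalized (hp : p.Prime) (hS : IsPGroup p S) (hA : A.Bifree)
    (hlw : LevelwiseClosed (preFixHom A)) {P Q R₀ : Subgroup S} (c : ℕ)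
    (hc : ∀ φ : P →* S, Gd A P φ → Nat.card (A.Fix P φ) = c)
    (hQ : (preFixHom A).IsConj P Q) (hR₀ : (preFixHom A).IsConj P R₀)
    (ht₀ : ¬ p ∣ Nat.card (imgL A (YSet A P R₀)))
    (hNle : Nat.card (Subgroup.normalizer (R₀ : Set S)) ≤ Nat.card (Subgroup.normalizer (Q : Set S))) :
    ¬ p ∣ Nat.card (imgL A (YSet A P Q)) := by
  have k1 := key_identity A hA P Q c hc
  have k2 := key_identity A hA P R₀ c hc
  -- a_Q = a_R₀ : card (IsoSet A P Q) = card (IsoSet A P R₀)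
  have haa : Nat.card (IsoSet A P Q) = Nat.card (IsoSet A P R₀) := by
    have hQR : (preFixHom A).IsConj R₀ Q :=
      isConj_trans A hA hlw (isConj_symm A hA hlw hR₀) hQ
    obtain ⟨ζ, hζ, hrζ⟩ := (isConj_iff A hA).mp hQR
    calc Nat.card (IsoSet A P Q) = Nat.card (IsoSet A Q P) := card_isoSet_swap A hA hlw P Q
      _ = Nat.card (IsoSet A R₀ P) := card_isoSet_comp A hA hlw ζ hζ hrζ P
      _ = Nat.card (IsoSet A P R₀) := card_isoSet_swap A hA hlw R₀ P
  obtain ⟨q, hq⟩ := card_subgroup_pow hp hS (Subgroup.normalizer (Q : Set S))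
  obtain ⟨r, hr⟩ := card_subgroup_pow hp hS (Subgroup.normalizer (R₀ : Set S))
  have hrq : r ≤ q := by
    rw [hq, hr] at hNle
    exact (Nat.pow_le_pow_iff_right hp.one_lt).mp hNle
  have h3 : Nat.card (imgL A (YSet A P R₀)) * p ^ r
      = Nat.card (imgL A (YSet A P Q)) * p ^ q := by
    rw [← hr, ← hq, k1, k2, haa]
  have h4 : Nat.card (imgL A (YSet A P R₀))
      = Nat.card (imgL A (YSet A P Q)) * p ^ (q - r) := by
    have h5 : Nat.card (imgL A (YSet A P R₀)) * p ^ r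
        = (Nat.card (imgL A (YSet A P Q)) * p ^ (q - r)) * p ^ r := by
      rw [h3, mul_assoc, ← pow_add]
      congr 2
      omega
    exact Nat.eq_of_mul_eq_mul_right ((pow_pos hp.pos r)) h5
  intro hdvd
  exact ht₀ (h4 ▸ hdvd.mul_right _)

end Final
end Stmt12

open Stmt12 BisetAction in
/-- Let `S` be a finite `p`-group and `X` a finite bifree `(S,S)`-biset
with `|X|/|S|` prime to `p` such that `Pre-Fix(X)` is level-wise closed.  If `P ≤ S` is
such that all the fixed-point sets `X^{(P,φ)}` for `φ ∈ Hom_{Pre-Fix(X)}(P,S)` have the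
same cardinality, then `Pre-Fix(X)` is saturated at `P`. -/
theorem preFix_saturatedAt
    (p : ℕ) (hp : p.Prime) (S : Type*) [Group S] [Finite S] (hS : IsPGroup p S)
    (X : Type*) [Finite X] (A : BisetAction S S X) (hA : A.Bifree)
    (hcard : ¬ p ∣ Nat.card X / Nat.card S)
    (hlw : LevelwiseClosed (preFixHom A))
    (P : Subgroup S)
    (hconst : ∀ φ ψ : P →* S, φ ∈ preFixHom A P ⊤ → ψ ∈ preFixHom A P ⊤ →
      Nat.card (A.Fix P φ) = Nat.card (A.Fix P ψ)) :
    SaturatedAt p (preFixHom A) P := by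
  classical
  set c := Nat.card (A.Fix P (conjHom 1 P)) with hcdef
  have hgdP : Gd A P (conjHom 1 P) := gd_conjHom A hlw 1 P
  have hc : ∀ φ : P →* S, Gd A P φ → Nat.card (A.Fix P φ) = c := fun φ h =>
    hconst φ (conjHom 1 P) ((mem_preFix_top_iff A hA).mpr h)
      ((mem_preFix_top_iff A hA).mpr hgdP)
  obtain ⟨R₀, hconj₀, ht₀⟩ := exists_good_R A hp hS hA hcard P
  constructor
  · -- Axiom I at P
    intro Q hQ hFN
    have hNle : Nat.card (Subgroup.normalizer (R₀ : Set S)) ≤ Nat.card (Subgroup.normalizer (Q : Set S)) :=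
      hFN R₀ (isConj_trans A hA hlw (isConj_symm A hA hlw hQ) hconj₀)
    have htQ := tQ_of_fullyNormalized A hp hS hA hlw c hc hQ hconj₀ ht₀ hNle
    obtain ⟨k, c', hk, hc', hkk, hcc⟩ := crucial A hp hA hlw c hc hQ htQ
    constructor
    · -- fully centralized
      intro R' hQR'
      have hPR' : (preFixHom A).IsConj P R' := isConj_trans A hA hlw hQ hQR'
      have h1 : Nat.card (Subgroup.centralizer (R' : Set S)) ∣ c :=
        centralizer_dvd_c A hA hlw c hc hPR'
      obtain ⟨a, ha⟩ := card_subgroup_pow hp hS (Subgroup.centralizer (R' : Set S))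
      obtain ⟨b, hb⟩ := card_subgroup_pow hp hS (Subgroup.centralizer (Q : Set S))
      rw [hcc, hb, ha] at h1
      rw [ha, hb]
      have h2 : p ^ a ∣ p ^ b := Nat.Coprime.dvd_of_dvd_mul_right
        (Nat.Coprime.pow_left a ((Nat.Prime.coprime_iff_not_dvd hp).mpr hc')) h1
      exact Nat.le_of_dvd ((pow_pos hp.pos b)) h2
    · -- Sylow
      refine ⟨autSSet_subset A hA hlw Q, ?_, ⟨k, hk, ?_⟩⟩
      · obtain ⟨q, hqq⟩ := card_subgroup_pow hp hS (Subgroup.normalizer (Q : Set S))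
        have hdvd : Nat.card (autSSet Q) ∣ p ^ q := by
          rw [← hqq]
          exact ⟨Nat.card (Subgroup.centralizer (Q : Set S)), card_normalizer_eq Q⟩
        obtain ⟨m, _, hm⟩ := (Nat.dvd_prime_pow hp).mp hdvd
        exact ⟨m, hm⟩
      · rw [card_CQQ_eq A hA Q, hkk]
  · -- Axiom II at P
    intro φ hm hFC
    have hgdφ : Gd A P φ := hm.2.2
    obtain ⟨k₀, c₀, hk₀, hc₀, hkk₀, hcc₀⟩ := crucial A hp hA hlw c hc hconj₀ ht₀
    have hQconj : (preFixHom A).IsConj P φ.range :=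
      (isConj_iff A hA).mpr ⟨φ, hgdφ, rfl⟩
    have hCle : Nat.card (Subgroup.centralizer (R₀ : Set S))
        ≤ Nat.card (Subgroup.centralizer ((φ.range : Subgroup S) : Set S)) :=
      hFC R₀ (isConj_trans A hA hlw (isConj_symm A hA hlw hQconj) hconj₀)
    have hfix_c : c = Nat.card (Subgroup.centralizer ((φ.range : Subgroup S) : Set S))
        * Nat.card (imgL A (A.Fix P φ)) := by
      rw [← hc φ hgdφ]
      exact card_fix_eq A hA φ hgdφ
    -- p ∤ |W|
    have hpw : ¬ p ∣ Nat.card (imgL A (A.Fix P φ)) := by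
      obtain ⟨a, ha⟩ := card_subgroup_pow hp hS (Subgroup.centralizer (R₀ : Set S))
      obtain ⟨b, hb⟩ := card_subgroup_pow hp hS
        (Subgroup.centralizer ((φ.range : Subgroup S) : Set S))
      have hab : a ≤ b := by
        rw [ha, hb] at hCle
        exact (Nat.pow_le_pow_iff_right hp.one_lt).mp hCle
      have h3 : p ^ a * c₀ = p ^ b * Nat.card (imgL A (A.Fix P φ)) := by
        rw [← ha, ← hb, ← hcc₀, hfix_c]
      have h4 : c₀ = p ^ (b - a) * Nat.card (imgL A (A.Fix P φ)) := by
        have h5 : p ^ a * c₀ = p ^ a * (p ^ (b - a) * Nat.card (imgL A (A.Fix P φ))) := by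
          rw [h3, ← mul_assoc, ← pow_add]
          congr 2
          omega
        exact Nat.eq_of_mul_eq_mul_left ((pow_pos hp.pos a)) h5
      intro hdvd
      exact hc₀ (h4 ▸ hdvd.mul_left _)
    -- invariance of W under N_φ
    have hW : ∀ ℓ ∈ imgL A (A.Fix P φ), ∀ g : Nphi P φ,
        rmulL A (g : S) ℓ ∈ imgL A (A.Fix P φ) := by
      rintro ℓ ⟨x, hxF, rfl⟩ g
      obtain ⟨hgN, y, hyN, hy⟩ := g.2
      refine ⟨A.smul y⁻¹ (A.rmul x (g : S)), ?_, ?_⟩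
      · intro u
        have hu' : (g : S) * (u : S) * (g : S)⁻¹ ∈ P :=
          (Subgroup.mem_normalizer_iff.mp hgN (u : S)).mp u.2
        have heq : φ ⟨(g : S) * (u : S) * (g : S)⁻¹, hu'⟩ = y * φ u * y⁻¹ :=
          hy (u : S) _ u.2 hu' rfl
        calc A.rmul (A.smul y⁻¹ (A.rmul x (g : S))) (u : S)
            = A.smul y⁻¹ (A.rmul (A.rmul x (g : S)) (u : S)) := A.smul_rmul _ _ _
          _ = A.smul y⁻¹ (A.rmul x ((g : S) * (u : S))) := by rw [A.rmul_rmul]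
          _ = A.smul y⁻¹ (A.rmul x (((g : S) * (u : S) * (g : S)⁻¹) * (g : S))) := by
              congr 1
              group
          _ = A.smul y⁻¹ (A.rmul (A.rmul x ((g : S) * (u : S) * (g : S)⁻¹)) (g : S)) := by
              rw [A.rmul_rmul]
          _ = A.smul y⁻¹ (A.rmul (A.smul (φ ⟨(g : S) * (u : S) * (g : S)⁻¹, hu'⟩) x)
              (g : S)) := by rw [hxF ⟨(g : S) * (u : S) * (g : S)⁻¹, hu'⟩]
          _ = A.smul y⁻¹ (A.smul (φ ⟨(g : S) * (u : S) * (g : S)⁻¹, hu'⟩)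
              (A.rmul x (g : S))) := by rw [A.smul_rmul]
          _ = A.smul (y⁻¹ * (y * φ u * y⁻¹)) (A.rmul x (g : S)) := by
              rw [A.smul_smul, heq]
          _ = A.smul ((φ u) * y⁻¹) (A.rmul x (g : S)) := by
              congr 1
              group
          _ = A.smul (φ u) (A.smul y⁻¹ (A.rmul x (g : S))) := by rw [← A.smul_smul]
      · rw [rmulL_mk]
        exact mkL_smul A y⁻¹ (A.rmul x (g : S))
    obtain ⟨ℓ, hℓW, hfix⟩ := exists_pfixed_of_not_dvd A hp hS (Nphi P φ)
      (imgL A (A.Fix P φ)) hW hpw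
    obtain ⟨x₁, hx₁F, hx₁⟩ := hℓW
    have hcl : PClosed A (Nphi P φ) x₁ := by
      intro u
      have h1 : rmulL A (u : S) (mkL A x₁) = mkL A x₁ := by rw [hx₁]; exact hfix u
      rw [rmulL_mk] at h1
      exact (mkL_eq_iff A).mp h1.symm
    refine ⟨sigHom A hA (Nphi P φ) x₁ hcl, ?_, ?_⟩
    · intro F hF
      exact hF _ _ ((mem_preFix_top_iff A hA).mpr
        ⟨x₁, mem_fix_sigHom A hA (Nphi P φ) x₁ hcl⟩)
    · intro u hu hu'
      have h1 : A.rmul x₁ u = A.smul ((sigHom A hA (Nphi P φ) x₁ hcl) ⟨u, hu'⟩) x₁ :=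
        mem_fix_sigHom A hA (Nphi P φ) x₁ hcl ⟨u, hu'⟩
      have h2 : A.rmul x₁ u = A.smul (φ ⟨u, hu⟩) x₁ := hx₁F ⟨u, hu⟩
      exact left_cancel A hA (h1.symm.trans h2)
end

section
/- Let p be a prime, S a finite p-group, F a fusion system on S, and Ω a right characteristic biset for F (or a left characteristic biset for F). Then Pre-Fix(Ω) = F; that is, for all subgroups P,Q ≤ S, an injective homomorphism φ: P → Q satisfies Ω^{(P,ι_Q∘φ)} ≠ ∅ if and only if φ ∈ Hom_F(P,Q). Consequently FusFix(Ω) = FusOrb(Ω) = F. -/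
/-! ## Stability and characteristic bisets -/

section Char

variable {S X : Type*} [Group S]

/-- `X` is right stable along `φ : P →* S`: the `(P,S)`-biset `X_φ` (right `P`-action
through `φ`) is isomorphic to `X_{ι_P}` (right `P`-action through the inclusion). -/
def RightStableAlong (A : BisetAction S S X) {P : Subgroup S} (φ : P →* S) : Prop :=
  Nonempty (BisetIso (A.restrictRight φ) (A.restrictRight P.subtype))

/-- `X` is left stable along `φ : P →* S`: the `(S,P)`-biset with left `P`-action through
`φ` is isomorphic to the one with left `P`-action through the inclusion. -/
def LeftStableAlong (A : BisetAction S S X) {P : Subgroup S} (φ : P →* S) : Prop :=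
  Nonempty (BisetIso (A.restrictLeft φ) (A.restrictLeft P.subtype))

/-- `X` is right `F`-stable. -/
def RightFStable (F : FusionSystem S) (A : BisetAction S S X) : Prop :=
  ∀ P : Subgroup S, ∀ φ ∈ F.Hom P ⊤, RightStableAlong A φ

/-- `X` is left `F`-stable. -/
def LeftFStable (F : FusionSystem S) (A : BisetAction S S X) : Prop :=
  ∀ P : Subgroup S, ∀ φ ∈ F.Hom P ⊤, LeftStableAlong A φ

/-- `X` is `F`-generated: viewing `X` as an `(S×S)`-set via `(b,a)·x = b·x·a⁻¹`, the
stabilizer of every point is a twisted diagonal `Δ(P,φ)` with `φ` a morphism of `F`. -/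
def FGenerated (F : FusionSystem S) (A : BisetAction S S X) : Prop :=
  ∀ x : X, ∃ (P : Subgroup S) (φ : P →* S), φ ∈ F.Hom P ⊤ ∧
    ∀ b a : S, (A.smul b (A.rmul x a⁻¹) = x ↔ ∃ ha : a ∈ P, φ ⟨a, ha⟩ = b)

/-- A right characteristic biset for `F`: an `F`-generated, right `F`-stable biset whose
number of left `S`-orbits is prime to `p`. -/
def RightCharBiset (p : ℕ) (F : FusionSystem S) (A : BisetAction S S X) : Prop :=
  FGenerated F A ∧ RightFStable F A ∧ ¬ p ∣ Nat.card (BisetAction.leftOrbits A)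

/-- A left characteristic biset for `F`. -/
def LeftCharBiset (p : ℕ) (F : FusionSystem S) (A : BisetAction S S X) : Prop :=
  FGenerated F A ∧ LeftFStable F A ∧ ¬ p ∣ Nat.card (BisetAction.leftOrbits A)

end Char

/-- The orbit-type pre-fusion collection `Pre-Orb(X)`: morphisms from `P` to `Q` are the
injective homomorphisms `φ : P → Q` such that some point of `X` has `(S×S)`-stabilizer
equal to the twisted diagonal `Δ(P,φ)`. -/
def preOrbHom {S X : Type*} [Group S] (A : BisetAction S S X) : Collection S :=
  fun P Q => {φ | Function.Injective φ ∧ (∀ u : P, φ u ∈ Q) ∧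
    ∃ x : X, ∀ b a : S, (A.smul b (A.rmul x a⁻¹) = x ↔ ∃ ha : a ∈ P, φ ⟨a, ha⟩ = b)}

section Aux

variable {S : Type*} [Group S] {X : Type*}

lemma conjHom_apply' (s : S) (P : Subgroup S) (u : P) : conjHom s P u = s * u * s⁻¹ := rfl

namespace FusionSystem

lemma hom_mono (F : FusionSystem S) {P Q R : Subgroup S} {φ : P →* S}
    (hφ : φ ∈ F.Hom P Q) (hR : ∀ u : P, (φ u : S) ∈ R) : φ ∈ F.Hom P R := by
  have h1 := F.target_mem' hφ
  have h2 : conjHom (1 : S) φ.range ∈ F.Hom φ.range R := by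
    apply F.conj_mem'
    rintro u ⟨v, rfl⟩
    simpa using hR v
  have h3 := F.comp_mem' h1 h2
  have he : (conjHom (1 : S) φ.range).comp (φ.codRestrict φ.range (F.mapsTo' h1)) = φ := by
    ext u
    simp [conjHom_apply']
  rwa [he] at h3

lemma restr_mem (F : FusionSystem S) {P P' : Subgroup S} {φ' : P' →* S}
    (hφ' : φ' ∈ F.Hom P' ⊤) (hle : ∀ u : P, (u : S) ∈ P') (φ : P →* S)
    (hres : ∀ u : P, φ u = φ' ⟨u, hle u⟩) : φ ∈ F.Hom P ⊤ := by
  have hincl : conjHom (1 : S) P ∈ F.Hom P P' :=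
    F.conj_mem' P P' 1 (fun u hu => by simpa using hle ⟨u, hu⟩)
  have h3 := F.comp_mem' hincl hφ'
  have he : φ'.comp ((conjHom (1 : S) P).codRestrict P' (F.mapsTo' hincl)) = φ := by
    ext u
    rw [hres u]
    exact congrArg φ' (Subtype.ext (by simp [conjHom_apply']))
  rwa [he] at h3

end FusionSystem

end Aux

section Aux2

variable {S : Type*} [Group S] {X : Type*}

lemma leftFree_of_FGenerated (F : FusionSystem S) (A : BisetAction S S X)
    (hG : FGenerated F A) : A.LeftFree := by
  intro s x hsx
  obtain ⟨P', φ', hφ', hstab⟩ := hG x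
  obtain ⟨h1, hs⟩ := (hstab s 1).mp (by rw [inv_one, A.rmul_one]; exact hsx)
  rw [← hs]
  have h : (⟨1, h1⟩ : P') = 1 := rfl
  rw [h, map_one]

lemma rightFree_of_FGenerated (F : FusionSystem S) (A : BisetAction S S X)
    (hG : FGenerated F A) : A.RightFree := by
  intro a x hax
  obtain ⟨P', φ', hφ', hstab⟩ := hG x
  obtain ⟨ha, h1⟩ := (hstab 1 a⁻¹).mp (by rw [inv_inv, hax, A.one_smul])
  have h2 : (⟨a⁻¹, ha⟩ : P') = 1 := F.injective' hφ' (by rw [h1, map_one])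
  have h3 := congrArg Subtype.val h2
  simpa [inv_eq_one] using h3

/-- membership in `F` from a semi-stabilization condition, via `F`-generation. -/
lemma mem_hom_of_semistab (F : FusionSystem S) (A : BisetAction S S X)
    (hG : FGenerated F A) {P Q : Subgroup S} {φ : P →* S}
    (hmaps : ∀ u : P, (φ u : S) ∈ Q) (x : X)
    (hx : ∀ u : P, A.smul (φ u) (A.rmul x (↑u)⁻¹) = x) : φ ∈ F.Hom P Q := by
  obtain ⟨P'', φ'', hφ'', hstab⟩ := hG x
  have hle : ∀ u : P, (u : S) ∈ P'' := fun u => ((hstab (φ u) u).mp (hx u)).1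
  have hres : ∀ u : P, φ u = φ'' ⟨u, hle u⟩ := by
    intro u
    obtain ⟨ha, h⟩ := (hstab (φ u) u).mp (hx u)
    exact h.symm
  exact F.hom_mono (F.restr_mem hφ'' hle φ hres) hmaps

lemma exists_sigma (p : ℕ) (hp : p.Prime) [Finite S] [Finite X] (hS : IsPGroup p S)
    (F : FusionSystem S) (A : BisetAction S S X) (hG : FGenerated F A)
    (hcard : ¬ p ∣ Nat.card (BisetAction.leftOrbits A)) :
    ∃ (φ' : (⊤ : Subgroup S) →* S) (x₀ : X), φ' ∈ F.Hom ⊤ ⊤ ∧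
      ∀ a : S, A.rmul x₀ a = A.smul (φ' ⟨a, Subgroup.mem_top a⟩) x₀ := by
  haveI : Fact p.Prime := ⟨hp⟩
  letI act : MulAction S (A.leftOrbits) :=
    { smul := fun s => Quotient.map' (fun x => A.rmul x s⁻¹)
        (by rintro x y ⟨h, rfl⟩; exact ⟨h, A.smul_rmul h x s⁻¹⟩)
      one_smul := by
        intro q
        induction q using Quotient.inductionOn' with
        | h x =>
          show Quotient.mk'' (A.rmul x (1:S)⁻¹) = Quotient.mk'' x
          rw [inv_one, A.rmul_one]
      mul_smul := by
        intro s t q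
        induction q using Quotient.inductionOn' with
        | h x =>
          show Quotient.mk'' (A.rmul x (s*t)⁻¹) = Quotient.mk'' (A.rmul (A.rmul x t⁻¹) s⁻¹)
          rw [A.rmul_rmul, mul_inv_rev] }
  haveI : Finite (A.leftOrbits) := Quotient.finite _
  obtain ⟨q, hq⟩ := hS.nonempty_fixed_point_of_prime_not_dvd_card (A.leftOrbits) hcard
  obtain ⟨x₀, rfl⟩ := q.exists_rep
  replace hq : ∀ a : S, a • (@id A.leftOrbits (Quotient.mk'' x₀)) = @id A.leftOrbits (Quotient.mk'' x₀) := fun a => hq a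
  have hfix : ∀ a : S, ∃ t : S, A.rmul x₀ a = A.smul t x₀ := by
    intro a
    have h : (Quotient.mk'' (A.rmul x₀ a⁻¹⁻¹) : A.leftOrbits) = Quotient.mk'' x₀ := hq a⁻¹
    rw [inv_inv] at h
    obtain ⟨t, ht⟩ := Quotient.eq''.mp h
    refine ⟨t⁻¹, ?_⟩
    conv_rhs => rw [ht, A.smul_smul, inv_mul_cancel, A.one_smul]
  obtain ⟨P', φ', hφ', hstab⟩ := hG x₀
  have key : ∀ a : S, ∃ ha : a ∈ P', A.rmul x₀ a = A.smul (φ' ⟨a, ha⟩) x₀ := by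
    intro a
    obtain ⟨t, ht⟩ := hfix a
    have h1 : A.smul t (A.rmul x₀ a⁻¹) = x₀ := by
      rw [← A.smul_rmul, ← ht, A.rmul_rmul, mul_inv_cancel, A.rmul_one]
    obtain ⟨ha, h2⟩ := (hstab t a).mp h1
    exact ⟨ha, by rw [h2]; exact ht⟩
  have htop : P' = ⊤ := (Subgroup.eq_top_iff' P').mpr (fun a => (key a).1)
  subst htop
  refine ⟨φ', x₀, hφ', fun a => ?_⟩
  obtain ⟨ha, h⟩ := key a
  exact h

end Aux2

section Aux3

variable {S : Type*} [Group S] {X : Type*}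

lemma fix_nonempty (p : ℕ) (hp : p.Prime) [Finite S] [Finite X] (hS : IsPGroup p S)
    (F : FusionSystem S) (A : BisetAction S S X)
    (h : RightCharBiset p F A ∨ LeftCharBiset p F A)
    {P Q : Subgroup S} {φ : P →* S} (hφ : φ ∈ F.Hom P Q) : (A.Fix P φ).Nonempty := by
  have hG : FGenerated F A := h.elim (·.1) (·.1)
  have hcard : ¬ p ∣ Nat.card (BisetAction.leftOrbits A) := h.elim (·.2.2) (·.2.2)
  obtain ⟨σ, x₀, hσ, hx₀⟩ := exists_sigma p hp hS F A hG hcard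
  rcases h with hR | hL
  · -- right stable case
    have hstable := hR.2.1
    have hinjσ : Function.Injective σ := F.injective' hσ
    have hsurj : Function.Surjective σ := by
      have hcardeq : Nat.card ((⊤ : Subgroup S)) = Nat.card S := Subgroup.card_top
      exact ((Nat.bijective_iff_injective_and_card σ).mpr ⟨hinjσ, hcardeq⟩).2
    have hrange : σ.range = ⊤ := MonoidHom.range_eq_top.mpr hsurj
    obtain ⟨ψ₀, hψ₀, hψ₀inv⟩ := F.inv_mem' hσ
    have h1 : φ ∈ F.Hom P σ.range :=
      F.hom_mono hφ (fun u => by rw [hrange]; exact Subgroup.mem_top _)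
    have hψc := F.comp_mem' h1 hψ₀
    set ψc := ψ₀.comp (φ.codRestrict σ.range (F.mapsTo' h1)) with hψcdef
    have hkey : ∀ u : P, σ ⟨ψc u, Subgroup.mem_top _⟩ = φ u := by
      intro u
      obtain ⟨v, hv⟩ : φ u ∈ σ.range := F.mapsTo' h1 u
      have h2 : ψc u = (v : S) := by
        show ψ₀ ⟨φ u, F.mapsTo' h1 u⟩ = (v : S)
        have h3 : (⟨φ u, F.mapsTo' h1 u⟩ : σ.range) = ⟨σ v, ⟨v, rfl⟩⟩ := Subtype.ext hv.symm
        rw [h3]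
        exact hψ₀inv v
      rw [h2]
      have h4 : (⟨(v : S), Subgroup.mem_top _⟩ : (⊤ : Subgroup S)) = v := Subtype.ext rfl
      rw [h4, hv]
    obtain ⟨f⟩ := hstable P ψc hψc
    refine ⟨f.toEquiv x₀, fun u => ?_⟩
    calc A.rmul (f.toEquiv x₀) ↑u
        = f.toEquiv (A.rmul x₀ (ψc u)) := (f.map_rmul x₀ u).symm
      _ = f.toEquiv (A.smul (σ ⟨ψc u, Subgroup.mem_top _⟩) x₀) := by rw [hx₀ (ψc u)]
      _ = f.toEquiv (A.smul (φ u) x₀) := by rw [hkey u]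
      _ = A.smul (φ u) (f.toEquiv x₀) := f.map_smul (φ u) x₀
  · -- left stable case
    have hstable := hL.2.1
    obtain ⟨ψ₁, hψ₁, hψ₁inv⟩ := F.inv_mem' hφ
    have hincl : conjHom (1 : S) P ∈ F.Hom P ⊤ :=
      F.conj_mem' P ⊤ 1 (fun u hu => Subgroup.mem_top _)
    have hχ := F.comp_mem' hincl hσ
    set χ := σ.comp ((conjHom (1 : S) P).codRestrict ⊤ (F.mapsTo' hincl)) with hχdef
    have hχval : ∀ u : P, χ u = σ ⟨u, Subgroup.mem_top _⟩ :=
      fun u => congrArg σ (Subtype.ext (by simp [conjHom_apply']))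
    have hθ := F.comp_mem' hψ₁ hχ
    set θ := χ.comp (ψ₁.codRestrict P (F.mapsTo' hψ₁)) with hθdef
    have hθval : ∀ u : P, θ ⟨φ u, ⟨u, rfl⟩⟩ = σ ⟨u, Subgroup.mem_top _⟩ := by
      intro u
      show χ ⟨ψ₁ ⟨φ u, ⟨u, rfl⟩⟩, F.mapsTo' hψ₁ _⟩ = _
      have h5 : (⟨ψ₁ ⟨φ u, ⟨u, rfl⟩⟩, F.mapsTo' hψ₁ _⟩ : P) = u := Subtype.ext (hψ₁inv u)
      rw [h5]
      exact hχval u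
    obtain ⟨g⟩ := hstable φ.range θ hθ
    refine ⟨g.toEquiv x₀, fun u => ?_⟩
    calc A.rmul (g.toEquiv x₀) ↑u
        = g.toEquiv (A.rmul x₀ ↑u) := (g.map_rmul x₀ ↑u).symm
      _ = g.toEquiv (A.smul (σ ⟨↑u, Subgroup.mem_top _⟩) x₀) := by rw [hx₀ ↑u]
      _ = g.toEquiv (A.smul (θ ⟨φ u, ⟨u, rfl⟩⟩) x₀) := by rw [hθval u]
      _ = A.smul ((⟨φ u, ⟨u, rfl⟩⟩ : φ.range) : S) (g.toEquiv x₀) := g.map_smul _ x₀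
      _ = A.smul (φ u) (g.toEquiv x₀) := rfl

end Aux3


/-- Let `Ω` be a right (or left) characteristic biset for a fusion
system `F` on a finite `p`-group `S`.  Then `Pre-Fix(Ω) = F`; consequently the closures
`FusFix(Ω)` and `FusOrb(Ω)` of `Pre-Fix(Ω)` and `Pre-Orb(Ω)` also equal `F`. -/
theorem preFix_of_charBiset_eq
    (p : ℕ) (hp : p.Prime) (S : Type*) [Group S] [Finite S] (hS : IsPGroup p S)
    (F : FusionSystem S) (X : Type*) [Finite X] (A : BisetAction S S X)
    (h : RightCharBiset p F A ∨ LeftCharBiset p F A) :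
    (∀ P Q : Subgroup S, preFixHom A P Q = F.Hom P Q) ∧
    (∀ P Q : Subgroup S, closureHom (preFixHom A) P Q = F.Hom P Q) ∧
    (∀ P Q : Subgroup S, closureHom (preOrbHom A) P Q = F.Hom P Q) := by
  have hG : FGenerated F A := h.elim (·.1) (·.1)
  have part1 : ∀ P Q : Subgroup S, preFixHom A P Q = F.Hom P Q := by
    intro P Q
    apply Set.eq_of_subset_of_subset
    · rintro φ ⟨hinj, hmaps, x, hx⟩
      refine mem_hom_of_semistab F A hG hmaps x (fun u => ?_)
      rw [← A.smul_rmul, ← hx u, A.rmul_rmul, mul_inv_cancel, A.rmul_one]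
    · intro φ hφ
      exact ⟨F.injective' hφ, F.mapsTo' hφ, fix_nonempty p hp hS F A h hφ⟩
  refine ⟨part1, ?_, ?_⟩
  · intro P Q
    apply Set.eq_of_subset_of_subset
    · intro φ hcl
      exact hcl F (fun P' Q' => (part1 P' Q').le)
    · intro φ hφ F' hF'
      exact hF' P Q ((part1 P Q).symm ▸ hφ)
  · intro P Q
    apply Set.eq_of_subset_of_subset
    · intro φ hcl
      refine hcl F (fun P' Q' => ?_)
      rintro φ' ⟨hinj, hmaps, x, hstabx⟩
      refine mem_hom_of_semistab F A hG hmaps x (fun u => ?_)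
      exact (hstabx (φ' u) ↑u).mpr ⟨u.2, congrArg φ' (Subtype.coe_eta u u.2)⟩
    · intro φ hφ F' hF'
      obtain ⟨x, hx⟩ := fix_nonempty p hp hS F A h hφ
      obtain ⟨P'', φ'', hφ''F, hstab⟩ := hG x
      have hmem : φ'' ∈ preOrbHom A P'' ⊤ :=
        ⟨F.injective' hφ''F, fun u => Subgroup.mem_top _, ⟨x, hstab⟩⟩
      have hF'' : φ'' ∈ F'.Hom P'' ⊤ := hF' P'' ⊤ hmem
      have hsemi : ∀ u : P, A.smul (φ u) (A.rmul x (↑u)⁻¹) = x := fun u => by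
        rw [← A.smul_rmul, ← hx u, A.rmul_rmul, mul_inv_cancel, A.rmul_one]
      have hle : ∀ u : P, (u : S) ∈ P'' := fun u => ((hstab (φ u) u).mp (hsemi u)).1
      have hres : ∀ u : P, φ u = φ'' ⟨u, hle u⟩ := by
        intro u
        obtain ⟨ha, hh⟩ := (hstab (φ u) u).mp (hsemi u)
        exact hh.symm
      exact F'.hom_mono (F'.restr_mem hF'' hle φ hres) (F.mapsTo' hφ)
end

section
/- Let S be a finite group, X and Y finite (S,S)-bisets, P ≤ S a subgroup, ψ: P → S a homomorphism, and φ: P → S an injective homomorphism. Let Z_a denote X×Y with the (S, S×S)-biset structure (b₁,b₂)·(x,y)·a = (b₁·x·a, b₂·y·a), and Z_b denote X×Y with the structure (b₁,b₂)·(x,y)·a = (b₁·x·b₂⁻¹, b₂·y·a). Let ψ×φ: P → S×S be u ↦ (ψ(u),φ(u)). Then |Z_a^{(P,ψ×φ)}| = |X^{(P,ψ)}| · |Y^{(P,φ)}| and |Z_b^{(P,ψ×φ)}| = |X^{(φ(P), ψ∘φ⁻¹)}| · |Y^{(P,φ)}|, where φ⁻¹: φ(P) → P is the inverse of the isomorphism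 induced by φ. -/
/-! ### The standard bisets `[L,ψ] = H ×_{(L,ψ)} G` -/

section Std

variable {G H : Type*} [Group G] [Group H]

/-- The setoid on `H × G` generated by `(x·ψ(l), y) ∼ (x, l·y)` for `l ∈ L`. -/
def pairSetoid (L : Subgroup G) (ψ : L →* H) : Setoid (H × G) where
  r a b := ∃ l : L, b.1 = a.1 * ψ l ∧ b.2 = (l : G)⁻¹ * a.2
  iseqv := by
    refine ⟨fun a => ⟨1, by simp⟩, ?_, ?_⟩
    · rintro ⟨a1, a2⟩ ⟨b1, b2⟩ ⟨l, h1, h2⟩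
      dsimp only at h1 h2 ⊢
      refine ⟨l⁻¹, ?_, ?_⟩
      · rw [map_inv, h1, mul_assoc, mul_inv_cancel, mul_one]
      · rw [h2]; simp [mul_assoc]
    · rintro ⟨a1, a2⟩ ⟨b1, b2⟩ ⟨c1, c2⟩ ⟨l, h1, h2⟩ ⟨m, h3, h4⟩
      dsimp only at h1 h2 h3 h4 ⊢
      refine ⟨l * m, ?_, ?_⟩
      · rw [map_mul, h3, h1, mul_assoc]
      · rw [h4, h2]
        simp only [Subgroup.coe_mul, mul_inv_rev, mul_assoc]

/-- The biset `[L,ψ] = H ×_{(L,ψ)} G`: the quotient of `H × G` by the relation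
`(x·ψ(l), y) ∼ (x, l·y)` for `l ∈ L`. -/
def stdBiset (L : Subgroup G) (ψ : L →* H) : Type _ := Quotient (pairSetoid L ψ)

/-- The `(G,H)`-biset structure on `[L,ψ]`: `h·[x,y]·g = [h·x, y·g]`. -/
def stdBisetAction (L : Subgroup G) (ψ : L →* H) : BisetAction G H (stdBiset L ψ) where
  smul h := Quotient.map (fun a => (h * a.1, a.2)) (by
    rintro ⟨a1, a2⟩ ⟨b1, b2⟩ ⟨l, h1, h2⟩
    dsimp only at h1 h2 ⊢
    exact ⟨l, by rw [h1, mul_assoc], h2⟩)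
  rmul x g := Quotient.map (fun a => (a.1, a.2 * g)) (by
    rintro ⟨a1, a2⟩ ⟨b1, b2⟩ ⟨l, h1, h2⟩
    dsimp only at h1 h2 ⊢
    exact ⟨l, h1, by rw [h2, mul_assoc]⟩) x
  one_smul x := by
    refine Quotient.inductionOn x (fun a => ?_)
    exact congrArg (Quotient.mk _) (by dsimp only; rw [one_mul])
  mul_smul h₁ h₂ x := by
    refine Quotient.inductionOn x (fun a => ?_)
    exact congrArg (Quotient.mk _) (by dsimp only; rw [mul_assoc])
  rmul_one x := by
    refine Quotient.inductionOn x (fun a => ?_)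
    exact congrArg (Quotient.mk _) (by dsimp only; rw [mul_one])
  rmul_mul x g₁ g₂ := by
    refine Quotient.inductionOn x (fun a => ?_)
    exact congrArg (Quotient.mk _) (by dsimp only; rw [mul_assoc])
  smul_rmul h x g := by
    refine Quotient.inductionOn x (fun a => ?_)
    rfl

end Std

/-! ### Tensor product (composition) of bisets -/

section Tensor

variable {G H K : Type*} [Group G] [Group H] [Group K] {X Y : Type*}

/-- The setoid on `Y × X` defining `Y ×_H X`, for `X` a `(G,H)`-biset and `Y` an
`(H,K)`-biset: `(y·h, x) ∼ (y, h·x)`. -/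
def tensorSetoid (A : BisetAction G H X) (B : BisetAction H K Y) : Setoid (Y × X) where
  r a b := ∃ h : H, b.1 = B.rmul a.1 h ∧ b.2 = A.smul h⁻¹ a.2
  iseqv := by
    refine ⟨fun a => ⟨1, by rw [B.rmul_one], by rw [inv_one, A.one_smul]⟩, ?_, ?_⟩
    · rintro ⟨y, x⟩ ⟨y', x'⟩ ⟨h, h1, h2⟩
      dsimp only at h1 h2 ⊢
      refine ⟨h⁻¹, ?_, ?_⟩
      · rw [h1, B.rmul_rmul, mul_inv_cancel, B.rmul_one]
      · rw [h2, A.smul_smul, inv_inv, mul_inv_cancel, A.one_smul]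
    · rintro ⟨y, x⟩ ⟨y', x'⟩ ⟨y'', x''⟩ ⟨h, h1, h2⟩ ⟨h', h3, h4⟩
      dsimp only at h1 h2 h3 h4 ⊢
      refine ⟨h * h', ?_, ?_⟩
      · rw [h3, h1, B.rmul_rmul]
      · rw [h4, h2, A.smul_smul, mul_inv_rev]

/-- The composite biset `Y ×_H X`, a `(G,K)`-biset. -/
def tensorBiset (A : BisetAction G H X) (B : BisetAction H K Y) : Type _ :=
  Quotient (tensorSetoid A B)

/-- The `(G,K)`-biset structure on `Y ×_H X`. -/
def tensorAction (A : BisetAction G H X) (B : BisetAction H K Y) :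
    BisetAction G K (tensorBiset A B) where
  smul k := Quotient.map (fun a => (B.smul k a.1, a.2)) (by
    rintro ⟨y, x⟩ ⟨y', x'⟩ ⟨h, h1, h2⟩
    dsimp only at h1 h2 ⊢
    exact ⟨h, by rw [h1, B.smul_rmul], h2⟩)
  rmul z g := Quotient.map (fun a => (a.1, A.rmul a.2 g)) (by
    rintro ⟨y, x⟩ ⟨y', x'⟩ ⟨h, h1, h2⟩
    dsimp only at h1 h2 ⊢
    exact ⟨h, h1, by rw [h2, A.smul_rmul]⟩) z
  one_smul z := by
    refine Quotient.inductionOn z (fun a => ?_)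
    exact congrArg (Quotient.mk _) (by dsimp only; rw [B.one_smul])
  mul_smul k₁ k₂ z := by
    refine Quotient.inductionOn z (fun a => ?_)
    exact congrArg (Quotient.mk _) (by dsimp only; rw [B.mul_smul])
  rmul_one z := by
    refine Quotient.inductionOn z (fun a => ?_)
    exact congrArg (Quotient.mk _) (by dsimp only; rw [A.rmul_one])
  rmul_mul z g₁ g₂ := by
    refine Quotient.inductionOn z (fun a => ?_)
    exact congrArg (Quotient.mk _) (by dsimp only; rw [A.rmul_mul])
  smul_rmul k z g := by
    refine Quotient.inductionOn z (fun a => ?_)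
    rfl

end Tensor

/-! ### Products of bisets -/

section Prod

variable {G₁ G₂ H₁ H₂ S : Type*} [Group G₁] [Group G₂] [Group H₁] [Group H₂] [Group S]
variable {X Y : Type*}

/-- The product of a `(G₁,H₁)`-biset and a `(G₂,H₂)`-biset, a
`(G₁ × G₂, H₁ × H₂)`-biset with coordinatewise actions. -/
def prodAction (A : BisetAction G₁ H₁ X) (B : BisetAction G₂ H₂ Y) :
    BisetAction (G₁ × G₂) (H₁ × H₂) (X × Y) where
  smul h z := (A.smul h.1 z.1, B.smul h.2 z.2)
  rmul z g := (A.rmul z.1 g.1, B.rmul z.2 g.2)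
  one_smul z := by simp [A.one_smul, B.one_smul]
  mul_smul h₁ h₂ z := by simp [A.mul_smul, B.mul_smul]
  rmul_one z := by simp [A.rmul_one, B.rmul_one]
  rmul_mul z g₁ g₂ := by simp [A.rmul_mul, B.rmul_mul]
  smul_rmul h z g := by simp [A.smul_rmul, B.smul_rmul]

/-- `X × Y` endowed with the `(S, H₁ × H₂)`-biset structure
`(b₁,b₂)·(x,y)·a = (b₁·x·a, b₂·y·a)` (the right `S`-action is diagonal). -/
def diagProdAction (A : BisetAction S H₁ X) (B : BisetAction S H₂ Y) :
    BisetAction S (H₁ × H₂) (X × Y) where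
  smul h z := (A.smul h.1 z.1, B.smul h.2 z.2)
  rmul z a := (A.rmul z.1 a, B.rmul z.2 a)
  one_smul z := by simp [A.one_smul, B.one_smul]
  mul_smul h₁ h₂ z := by simp [A.mul_smul, B.mul_smul]
  rmul_one z := by simp [A.rmul_one, B.rmul_one]
  rmul_mul z g₁ g₂ := by simp [A.rmul_mul, B.rmul_mul]
  smul_rmul h z g := by simp [A.smul_rmul, B.smul_rmul]

/-- `X × Y` endowed with the `(S, S × S)`-biset structure
`(b₁,b₂)·(x,y)·a = (b₁·x·b₂⁻¹, b₂·y·a)`, for `(S,S)`-bisets `X` and `Y`. -/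
def twistProdAction (A : BisetAction S S X) (B : BisetAction S S Y) :
    BisetAction S (S × S) (X × Y) where
  smul b z := (A.rmul (A.smul b.1 z.1) b.2⁻¹, B.smul b.2 z.2)
  rmul z a := (z.1, B.rmul z.2 a)
  one_smul z := by simp [A.one_smul, B.one_smul, A.rmul_one]
  mul_smul b c z := by
    simp only [Prod.fst_mul, Prod.snd_mul, Prod.mk.injEq, mul_inv_rev]
    refine ⟨?_, B.mul_smul _ _ _⟩
    rw [A.mul_smul, ← A.rmul_rmul, A.smul_rmul]
  rmul_one z := by simp [B.rmul_one]
  rmul_mul z g₁ g₂ := by simp [B.rmul_mul]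
  smul_rmul h z g := by simp [B.smul_rmul]

end Prod

/-- Let `S` be a finite group, `X Y` finite `(S,S)`-bisets, `P ≤ S`,
`ψ : P →* S` a homomorphism and `φ : P →* S` an injective homomorphism.  Write `Z_a` for
`X×Y` with the `(S,S×S)`-actions `(b₁,b₂)·(x,y)·a = (b₁·x·a, b₂·y·a)` and `Z_b` for
`X×Y` with `(b₁,b₂)·(x,y)·a = (b₁·x·b₂⁻¹, b₂·y·a)`.  Then
`|Z_a^{(P,ψ×φ)}| = |X^{(P,ψ)}|·|Y^{(P,φ)}|` and
`|Z_b^{(P,ψ×φ)}| = |X^{(φ(P),ψ∘φ⁻¹)}|·|Y^{(P,φ)}|`, where `ψ∘φ⁻¹ : φ.range →* S` is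
the homomorphism `χ` characterized by `χ(φ(u)) = ψ(u)` for `u ∈ P`. -/
theorem card_fix_prod_bisets
    (S : Type*) [Group S] [Finite S] (X Y : Type*) [Finite X] [Finite Y]
    (A : BisetAction S S X) (B : BisetAction S S Y)
    (P : Subgroup S) (ψ φ : P →* S) (hφ : Function.Injective φ)
    (χ : φ.range →* S) (hχ : ∀ u : P, χ ⟨φ u, ⟨u, rfl⟩⟩ = ψ u) :
    Nat.card ((diagProdAction A B).Fix P (ψ.prod φ)) =
      Nat.card (A.Fix P ψ) * Nat.card (B.Fix P φ) ∧
    Nat.card ((twistProdAction A B).Fix P (ψ.prod φ)) =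
      Nat.card (A.Fix φ.range χ) * Nat.card (B.Fix P φ) := by
  constructor
  · rw [← Nat.card_prod]
    apply Nat.card_congr
    exact {
      toFun := fun z => (⟨z.1.1, fun u => congrArg Prod.fst (z.2 u)⟩,
                         ⟨z.1.2, fun u => congrArg Prod.snd (z.2 u)⟩)
      invFun := fun p => ⟨(p.1.1, p.2.1), fun u => Prod.ext (p.1.2 u) (p.2.2 u)⟩
      left_inv := fun z => rfl
      right_inv := fun p => rfl }
  · rw [← Nat.card_prod]
    apply Nat.card_congr
    refine {
      toFun := fun z => (⟨z.1.1, fun v => ?_⟩,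
                         ⟨z.1.2, fun u => congrArg Prod.snd (z.2 u)⟩)
      invFun := fun p => ⟨(p.1.1, p.2.1), fun u => Prod.ext ?_ (p.2.2 u)⟩
      left_inv := fun z => rfl
      right_inv := fun p => rfl }
    · obtain ⟨u, hu⟩ := v.2
      have h1 : (z.1).1 = A.rmul (A.smul (ψ u) (z.1).1) (φ u)⁻¹ :=
        congrArg Prod.fst (z.2 u)
      have hv : v = ⟨φ u, ⟨u, rfl⟩⟩ := Subtype.ext hu.symm
      rw [hv, hχ u]
      calc A.rmul (z.1).1 ((⟨φ u, ⟨u, rfl⟩⟩ : φ.range) : S)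
          = A.rmul (A.rmul (A.smul (ψ u) (z.1).1) (φ u)⁻¹) (φ u) := by
            rw [← h1]
        _ = A.smul (ψ u) (z.1).1 := by
            rw [A.rmul_rmul, inv_mul_cancel, A.rmul_one]
    · have h1 : A.rmul p.1.1 ((⟨φ u, ⟨u, rfl⟩⟩ : φ.range) : S)
          = A.smul (χ ⟨φ u, ⟨u, rfl⟩⟩) p.1.1 := p.1.2 _
      rw [hχ u] at h1
      show p.1.1 = A.rmul (A.smul (ψ u) p.1.1) (φ u)⁻¹
      rw [← h1, A.rmul_rmul]
      simp [A.rmul_one]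
end

section
/- Let p be a prime, S a finite p-group, and X a finite (S,S)-biset satisfying Frobenius reciprocity. Then for every subgroup P ≤ S, every homomorphism ψ: P → S, and every injective homomorphism φ: P → S, one has |X^{(P,φ)}| · |X^{(P,ψ)}| = |X^{(P,φ)}| · |X^{(φ(P), ψ∘φ⁻¹)}|. In particular, if X^{(P,φ)} ≠ ∅, then |X^{(P,ψ)}| = |X^{(φ(P), ψ∘φ⁻¹)}|. -/
/-- A finite `(S,S)`-biset `X` satisfies Frobenius reciprocity if the `(S,S×S)`-biset
`X×X` with actions `(b₁,b₂)·(x,y)·a = (b₁·x·a, b₂·y·a)` is isomorphic to the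
`(S,S×S)`-biset `X×X` with actions `(b₁,b₂)·(x,y)·a = (b₁·x·b₂⁻¹, b₂·y·a)`
(these model `(X×X)∘[S,Δ]` and `((X×1)∘[S,Δ])∘X` respectively). -/
def FrobeniusRec {S X : Type*} [Group S] (A : BisetAction S S X) : Prop :=
  Nonempty (BisetIso (diagProdAction A A) (twistProdAction A A))

section Aux

namespace BisetAction

variable {G H : Type*} [Group G] [Group H] {X Y : Type*}

/-- A biset isomorphism restricts to a bijection of fixed-point sets. -/
def fixEquivOfIso {A : BisetAction G H X} {B : BisetAction G H Y}
    (F : BisetIso A B) (P : Subgroup G) (θ : P →* H) :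
    A.Fix P θ ≃ B.Fix P θ where
  toFun x := ⟨F.toEquiv x, fun u => by
    rw [← F.map_rmul, x.2 u, F.map_smul]⟩
  invFun y := ⟨F.toEquiv.symm y, fun u => by
    apply F.toEquiv.injective
    rw [F.map_rmul, Equiv.apply_symm_apply, y.2 u, F.map_smul, Equiv.apply_symm_apply]⟩
  left_inv x := Subtype.ext (F.toEquiv.symm_apply_apply x)
  right_inv y := Subtype.ext (F.toEquiv.apply_symm_apply y)

end BisetAction

section

variable {S H₁ H₂ : Type*} [Group S] [Group H₁] [Group H₂] {X Y : Type*}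

/-- Fixed points of the diagonal product biset split as a product of fixed sets. -/
def fixDiagEquiv (A : BisetAction S H₁ X) (B : BisetAction S H₂ Y)
    (P : Subgroup S) (θ₁ : P →* H₁) (θ₂ : P →* H₂) :
    (diagProdAction A B).Fix P (θ₁.prod θ₂) ≃ (A.Fix P θ₁) × (B.Fix P θ₂) where
  toFun z := (⟨z.1.1, fun u => congrArg Prod.fst (z.2 u)⟩,
              ⟨z.1.2, fun u => congrArg Prod.snd (z.2 u)⟩)
  invFun w := ⟨(w.1.1, w.2.1), fun u => Prod.ext (w.1.2 u) (w.2.2 u)⟩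
  left_inv z := rfl
  right_inv w := rfl

lemma twist_fst_iff (A : BisetAction S S X) (x : X) (a b : S) :
    x = A.rmul (A.smul b x) a⁻¹ ↔ A.rmul x a = A.smul b x := by
  constructor
  · intro h
    conv_lhs => rw [h]
    rw [A.rmul_rmul, inv_mul_cancel, A.rmul_one]
  · intro h
    rw [← h, A.rmul_rmul, mul_inv_cancel, A.rmul_one]

/-- Fixed points of the twisted product biset. -/
def fixTwistEquiv (A : BisetAction S S X) (P : Subgroup S) (ψ φ : P →* S)
    (χ : φ.range →* S) (hχ : ∀ u : P, χ ⟨φ u, ⟨u, rfl⟩⟩ = ψ u) :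
    (twistProdAction A A).Fix P (ψ.prod φ) ≃ (A.Fix φ.range χ) × (A.Fix P φ) where
  toFun z := (⟨z.1.1, by
      rintro ⟨v, u, rfl⟩
      have h1 := congrArg Prod.fst (z.2 u)
      rw [hχ u]
      exact (twist_fst_iff A z.1.1 (φ u) (ψ u)).mp h1⟩,
    ⟨z.1.2, fun u => congrArg Prod.snd (z.2 u)⟩)
  invFun w := ⟨(w.1.1, w.2.1), fun u => by
    refine Prod.ext ?_ (w.2.2 u)
    refine (twist_fst_iff A w.1.1 (φ u) (ψ u)).mpr ?_
    have := w.1.2 ⟨φ u, ⟨u, rfl⟩⟩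
    rwa [hχ u] at this⟩
  left_inv z := rfl
  right_inv w := rfl

end

end Aux

/-- Let `S` be a finite `p`-group and `X` a finite `(S,S)`-biset
satisfying Frobenius reciprocity.  For every `P ≤ S`, every homomorphism `ψ : P →* S`
and every injective homomorphism `φ : P →* S`, one has
`|X^{(P,φ)}|·|X^{(P,ψ)}| = |X^{(P,φ)}|·|X^{(φ(P),ψ∘φ⁻¹)}|`; in particular, if
`X^{(P,φ)} ≠ ∅` then `|X^{(P,ψ)}| = |X^{(φ(P),ψ∘φ⁻¹)}|`. -/
theorem frobeniusRec_fix_card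
    (p : ℕ) (hp : p.Prime) (S : Type*) [Group S] [Finite S] (hS : IsPGroup p S)
    (X : Type*) [Finite X] (A : BisetAction S S X) (hfrob : FrobeniusRec A)
    (P : Subgroup S) (ψ φ : P →* S) (hφ : Function.Injective φ)
    (χ : φ.range →* S) (hχ : ∀ u : P, χ ⟨φ u, ⟨u, rfl⟩⟩ = ψ u) :
    Nat.card (A.Fix P φ) * Nat.card (A.Fix P ψ) =
      Nat.card (A.Fix P φ) * Nat.card (A.Fix φ.range χ) ∧
    ((A.Fix P φ).Nonempty →
      Nat.card (A.Fix P ψ) = Nat.card (A.Fix φ.range χ)) := by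
  obtain ⟨F⟩ := hfrob
  have key : Nat.card (A.Fix P ψ) * Nat.card (A.Fix P φ) =
      Nat.card (A.Fix φ.range χ) * Nat.card (A.Fix P φ) := by
    have h1 := Nat.card_congr
      ((fixDiagEquiv A A P ψ φ).symm.trans
        ((BisetAction.fixEquivOfIso F P (ψ.prod φ)).trans
          (fixTwistEquiv A P ψ φ χ hχ)))
    rwa [Nat.card_prod, Nat.card_prod] at h1
  constructor
  · rw [mul_comm (Nat.card ↥(A.Fix P φ)), mul_comm (Nat.card ↥(A.Fix P φ))]
    exact key
  · intro hne
    have : Nonempty (A.Fix P φ) := hne.to_subtype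
    have hpos : 0 < Nat.card (A.Fix P φ) := Nat.card_pos
    exact Nat.eq_of_mul_eq_mul_right hpos key
end

section
/- Let p be a prime, S a finite p-group, and X a finite bifree (S,S)-biset with |X|/|S| prime to p that satisfies Frobenius reciprocity. Then: (i) for every P ≤ S and every injective homomorphism φ: P → S, X^{(P,φ)} ≠ ∅ if and only if X^{(φ(P),φ⁻¹)} ≠ ∅ (i.e., Pre-Fix(X) = Pre-Fix(op(X))); (ii) Pre-Fix(X) is level-wise closed; (iii) if φ: P → S and ψ: Q → S are injective homomorphisms with X^{(P,φ)} ≠ ∅, X^{(Q,ψ)} ≠ ∅ and φ(P) = ψ(Q), then |X^{(P,φ)}| = |X^{(Q,ψ)}|; and (iv) if φ, ψ: P → S are injective homomorphisms with X^{(P,φ)} ≠ ∅ and X^{(P,ψ)} ≠ ∅, then |X^{(φ(P),φ⁻¹)}| = |X^{(ψ(P),ψ⁻¹)}|. -/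
section Aux18

namespace BisetAction

variable {S X : Type*} [Group S] (A : BisetAction S S X)

/-- The generalized twisted-fixed-point set `{x | x·f(t) = g(t)·x for all t}`. -/
def dset {T : Type*} (f g : T → S) : Set X := {x | ∀ t, A.rmul x (f t) = A.smul (g t) x}

lemma fix_eq_dset (P : Subgroup S) (φ : P →* S) :
    A.Fix P φ = A.dset (fun u : P => (u : S)) (fun u : P => φ u) := rfl

lemma mem_dset {T : Type*} {f g : T → S} {x : X} :
    x ∈ A.dset f g ↔ ∀ t, A.rmul x (f t) = A.smul (g t) x := Iff.rfl

lemma dset_reindex {T T' : Type*} (e : T' → T) (he : Function.Surjective e) (f g : T → S) :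
    A.dset (f ∘ e) (g ∘ e) = A.dset f g := by
  ext x
  constructor
  · intro H t
    obtain ⟨t', rfl⟩ := he t
    exact H t'
  · intro H t'
    exact H (e t')

lemma rmul_inv_eq_iff (x y : X) (a : S) : x = A.rmul y a⁻¹ ↔ A.rmul x a = y := by
  constructor
  · rintro rfl
    rw [A.rmul_rmul, inv_mul_cancel, A.rmul_one]
  · rintro rfl
    rw [A.rmul_rmul, mul_inv_cancel, A.rmul_one]

variable [Finite S] [Finite X]

lemma dset_nonempty_iff_card {T : Type*} (f g : T → S) :
    (A.dset f g).Nonempty ↔ Nat.card (A.dset f g) ≠ 0 := by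
  rw [Nat.card_ne_zero]
  constructor
  · intro h
    exact ⟨h.to_subtype, inferInstance⟩
  · rintro ⟨h, -⟩
    exact Set.nonempty_coe_sort.mp h

/-- The key consequence of Frobenius reciprocity. -/
lemma dset_card_mul (hfrob : FrobeniusRec A) {T : Type*} (f g h : T → S) :
    Nat.card (A.dset f g) * Nat.card (A.dset f h)
      = Nat.card (A.dset h g) * Nat.card (A.dset f h) := by
  obtain ⟨F⟩ := hfrob
  rw [← Nat.card_prod, ← Nat.card_prod]
  apply Nat.card_congr
  -- identify the products with subsets of `X × X`
  refine Equiv.trans Equiv.subtypeProdEquivProd.symm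
    (Equiv.trans ?_ Equiv.subtypeProdEquivProd)
  -- the middle equivalence, via `F`
  have hdiag : ∀ z : X × X, (z.1 ∈ A.dset f g ∧ z.2 ∈ A.dset f h) ↔
      ∀ t, (diagProdAction A A).rmul z (f t) = (diagProdAction A A).smul (g t, h t) z := by
    intro z
    rw [mem_dset, mem_dset, ← forall_and]
    refine forall_congr' fun t => ?_
    show _ ↔ (A.rmul z.1 (f t), A.rmul z.2 (f t)) = (A.smul (g t) z.1, A.smul (h t) z.2)
    rw [Prod.ext_iff]
  have htwist : ∀ w : X × X, (w.1 ∈ A.dset h g ∧ w.2 ∈ A.dset f h) ↔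
      ∀ t, (twistProdAction A A).rmul w (f t) = (twistProdAction A A).smul (g t, h t) w := by
    intro w
    rw [mem_dset, mem_dset, ← forall_and]
    refine forall_congr' fun t => ?_
    show _ ↔ (w.1, A.rmul w.2 (f t)) = (A.rmul (A.smul (g t) w.1) (h t)⁻¹, A.smul (h t) w.2)
    rw [Prod.ext_iff]
    exact and_congr (A.rmul_inv_eq_iff _ _ _).symm Iff.rfl
  refine Equiv.subtypeEquiv F.toEquiv (fun z => ?_)
  rw [hdiag, htwist]
  constructor
  · intro H t
    rw [← F.map_rmul, H t, F.map_smul]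
  · intro H t
    apply F.toEquiv.injective
    rw [F.map_rmul, H t, F.map_smul]

lemma dset_card_cancel (hfrob : FrobeniusRec A) {T : Type*} (f g h : T → S)
    (hne : (A.dset f h).Nonempty) :
    Nat.card (A.dset f g) = Nat.card (A.dset h g) := by
  have hpos : 0 < Nat.card (A.dset f h) :=
    Nat.pos_of_ne_zero ((A.dset_nonempty_iff_card f h).mp hne)
  exact Nat.eq_of_mul_eq_mul_right hpos (A.dset_card_mul hfrob f g h)

lemma smul_left_cancel (hA : A.Bifree) {a b : S} {x : X} (h : A.smul a x = A.smul b x) :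
    a = b := by
  have : A.smul (b⁻¹ * a) x = x := by rw [← A.smul_smul, h, A.smul_smul, inv_mul_cancel, A.one_smul]
  have := hA.1 _ _ this
  rw [inv_mul_eq_one] at this
  exact this.symm

lemma rmul_right_cancel (hA : A.Bifree) {a b : S} {x : X} (h : A.rmul x a = A.rmul x b) :
    a = b := by
  have : A.rmul x (a * b⁻¹) = x := by rw [A.rmul_mul, h, A.rmul_rmul, mul_inv_cancel, A.rmul_one]
  have := hA.2 _ _ this
  rw [mul_inv_eq_one] at this
  exact this

/-- Orbit counting: there is a bijective twisting map for the full group. -/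
lemma exists_seed {p : ℕ} (hp : p.Prime) (hS : IsPGroup p S) (hA : A.Bifree)
    (hcard : ¬ p ∣ Nat.card X / Nat.card S) :
    ∃ (φ : S → S) (x₀ : X), Function.Bijective φ ∧ ∀ s, A.rmul x₀ s = A.smul (φ s) x₀ := by
  haveI : Fact p.Prime := ⟨hp⟩
  set sd := A.leftOrbitSetoid with hsd
  -- the quotient map and card count
  have e : Quotient sd × S ≃ X := by
    refine Equiv.ofBijective (fun w => A.smul w.2 w.1.out) ⟨?_, ?_⟩
    · rintro ⟨ω, s⟩ ⟨ω', t⟩ h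
      dsimp only at h
      have hoo : ω = ω' := by
        rw [← Quotient.out_eq ω, ← Quotient.out_eq ω']
        apply Quotient.sound
        exact ⟨t⁻¹ * s, by rw [← A.smul_smul, h, A.smul_smul, inv_mul_cancel, A.one_smul]⟩
      subst hoo
      have : s = t := A.smul_left_cancel hA (by exact h)
      simp [this]
    · intro x
      obtain ⟨h, hh⟩ : sd.r (Quotient.mk sd x).out x := Quotient.exact (Quotient.out_eq _)
      exact ⟨(Quotient.mk sd x, h), hh.symm⟩
  have hcardΩ : ¬ p ∣ Nat.card (Quotient sd) := by
    have hX : Nat.card X = Nat.card (Quotient sd) * Nat.card S := by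
      rw [← Nat.card_congr e, Nat.card_prod]
    have hSpos : 0 < Nat.card S := Nat.card_pos
    rwa [hX, Nat.mul_div_cancel _ hSpos] at hcard
  -- the action of S on left orbits
  letI : MulAction S (Quotient sd) :=
    { smul := fun s ω => Quotient.map (fun x => A.rmul x s⁻¹)
        (by rintro a b ⟨h, rfl⟩; exact ⟨h, A.smul_rmul h a s⁻¹⟩) ω
      one_smul := fun ω => by
        refine Quotient.inductionOn ω (fun x => ?_)
        show Quotient.mk sd (A.rmul x 1⁻¹) = Quotient.mk sd x
        rw [inv_one, A.rmul_one]
      mul_smul := fun s t ω => by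
        refine Quotient.inductionOn ω (fun x => ?_)
        show Quotient.mk sd (A.rmul x (s * t)⁻¹) = Quotient.mk sd (A.rmul (A.rmul x t⁻¹) s⁻¹)
        rw [A.rmul_rmul, mul_inv_rev] }
  obtain ⟨ω₀, hω₀⟩ := hS.nonempty_fixed_point_of_prime_not_dvd_card (Quotient sd) hcardΩ
  set x₀ := ω₀.out with hx₀
  have spec : ∀ s : S, ∃ h : S, A.rmul x₀ s = A.smul h x₀ := by
    intro s
    have h1 : s⁻¹ • ω₀ = ω₀ := hω₀ s⁻¹
    have h2 : Quotient.mk sd (A.rmul x₀ s) = Quotient.mk sd x₀ := by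
      have : s⁻¹ • ω₀ = Quotient.mk sd (A.rmul x₀ s) := by
        rw [← Quotient.out_eq ω₀]
        show Quotient.mk sd (A.rmul ω₀.out s⁻¹⁻¹) = _
        rw [inv_inv]
      rw [← this, h1]; exact (Quotient.out_eq ω₀).symm
    obtain ⟨h, hh⟩ : sd.r (A.rmul x₀ s) x₀ := Quotient.exact h2
    refine ⟨h⁻¹, ?_⟩
    conv_rhs => rw [hh]
    rw [A.smul_smul, inv_mul_cancel, A.one_smul]
  choose φ hφ using spec
  have hinj : Function.Injective φ := by
    intro s t hst
    have : A.rmul x₀ s = A.rmul x₀ t := by rw [hφ, hφ, hst]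
    exact A.rmul_right_cancel hA this
  exact ⟨φ, x₀, Finite.injective_iff_bijective.mp hinj, hφ⟩

/-- The central lemma: there is an element of `X` commuting with all of `S`. -/
lemma dset_id_id_nonempty {p : ℕ} (hp : p.Prime) (hS : IsPGroup p S) (hA : A.Bifree)
    (hcard : ¬ p ∣ Nat.card X / Nat.card S) (hfrob : FrobeniusRec A) :
    (A.dset (id : S → S) id).Nonempty := by
  obtain ⟨φ, x₀, hbij, hx⟩ := A.exists_seed hp hS hA hcard
  set π : Equiv.Perm S := Equiv.ofBijective φ hbij with hπ
  have hpow : ∀ (n : ℕ) (s : S), (π ^ n) s = φ^[n] s := by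
    intro n
    induction n with
    | zero => intro s; simp
    | succ k ih =>
        intro s
        rw [pow_succ', Function.iterate_succ_apply', ← ih s]
        rfl
  have hiter : ∀ k : ℕ, (A.dset (id : S → S) (φ^[k + 1])).Nonempty := by
    intro k
    induction k with
    | zero => exact ⟨x₀, fun s => hx s⟩
    | succ k ih =>
        rw [A.dset_nonempty_iff_card,
          A.dset_card_cancel hfrob (id : S → S) (φ^[k + 1 + 1]) φ ⟨x₀, fun s => hx s⟩]
        have : A.dset φ (φ^[k + 1 + 1]) = A.dset (id : S → S) (φ^[k + 1]) := by
          have h1 : φ^[k + 1 + 1] = φ^[k + 1] ∘ φ := Function.iterate_succ φ (k + 1)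
          rw [h1]
          exact A.dset_reindex φ hbij.2 id (φ^[k + 1])
        rw [this, ← A.dset_nonempty_iff_card]
        exact ih
  have hord : 0 < orderOf π := by
    have : Finite (Equiv.Perm S) := inferInstance
    exact orderOf_pos π
  obtain ⟨m, hm⟩ : ∃ m, orderOf π = m + 1 := ⟨orderOf π - 1, (Nat.succ_pred_eq_of_pos hord).symm⟩
  have hid : φ^[m + 1] = (id : S → S) := by
    funext s
    rw [← hpow, ← hm, pow_orderOf_eq_one π]
    rfl
  have := hiter m
  rwa [hid] at this

end BisetAction

end Aux18

namespace BisetAction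

section Aux18b
variable {S X : Type*} [Group S] (A : BisetAction S S X)

lemma fix_range_eq (P : Subgroup S) (φ : P →* S) (ψf : ↥φ.range → S) :
    A.dset (fun v : φ.range => (v : S)) ψf
      = A.dset (fun u : P => φ u) (fun u : P => ψf ⟨φ u, ⟨u, rfl⟩⟩) := by
  ext x
  constructor
  · intro H u
    exact H ⟨φ u, ⟨u, rfl⟩⟩
  · intro H v
    obtain ⟨u, hu⟩ := MonoidHom.mem_range.mp v.2
    have hv : v = ⟨φ u, ⟨u, rfl⟩⟩ := Subtype.ext hu.symm
    rw [hv]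
    exact H u

lemma fix_range_inv_eq (P : Subgroup S) (φ : P →* S) (χ : ↥φ.range →* S)
    (hχ : ∀ u : P, χ ⟨φ u, ⟨u, rfl⟩⟩ = (u : S)) :
    A.Fix φ.range χ = A.dset (fun u : P => φ u) (fun u : P => (u : S)) := by
  ext x
  constructor
  · intro H u
    have h := H ⟨φ u, ⟨u, rfl⟩⟩
    rwa [hχ] at h
  · intro H v
    obtain ⟨u, hu⟩ := MonoidHom.mem_range.mp v.2
    have hv : v = ⟨φ u, ⟨u, rfl⟩⟩ := Subtype.ext hu.symm
    rw [hv, hχ]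
    exact H u

lemma op_fix_eq (P : Subgroup S) (φ : P →* S) :
    A.op.Fix P φ = A.dset (fun u : P => φ u) (fun u : P => (u : S)) := by
  ext x
  constructor
  · intro H u
    have h := H u⁻¹
    change A.smul ((↑(u⁻¹) : S))⁻¹ x = A.rmul x (φ u⁻¹)⁻¹ at h
    simp only [map_inv, InvMemClass.coe_inv, inv_inv] at h
    exact h.symm
  · intro H u
    change A.smul ((↑u : S))⁻¹ x = A.rmul x (φ u)⁻¹
    have h := H u⁻¹
    change A.rmul x (φ u⁻¹) = A.smul (↑(u⁻¹) : S) x at h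
    simp only [map_inv, InvMemClass.coe_inv] at h
    exact h.symm

variable [Finite S] [Finite X]

lemma dset_gg_nonempty (h0 : (A.dset (id : S → S) id).Nonempty) {T : Type*} (g : T → S) :
    (A.dset g g).Nonempty := by
  obtain ⟨x₀, hx₀⟩ := h0
  exact ⟨x₀, fun t => hx₀ (g t)⟩

lemma dset_fwd (hfrob : FrobeniusRec A) (h0 : (A.dset (id : S → S) id).Nonempty)
    {T : Type*} (f g : T → S) (hne : (A.dset f g).Nonempty) : (A.dset g f).Nonempty := by
  rw [A.dset_nonempty_iff_card, ← A.dset_card_cancel hfrob f f g hne]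
  exact (A.dset_nonempty_iff_card f f).mp (A.dset_gg_nonempty h0 f)

lemma dset_trans (hfrob : FrobeniusRec A) {T : Type*} (f g h : T → S)
    (h1 : (A.dset f h).Nonempty) (h2 : (A.dset h g).Nonempty) : (A.dset f g).Nonempty := by
  rw [A.dset_nonempty_iff_card, A.dset_card_cancel hfrob f g h h1,
    ← A.dset_nonempty_iff_card]
  exact h2

/-- For an injective `φ` with nonempty fixed-point set, `|X^{(P,φ)}|` equals
`|X^{(R, incl)}|` for `R = φ.range`. -/
lemma card_fix_eq_range (hfrob : FrobeniusRec A) (h0 : (A.dset (id : S → S) id).Nonempty)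
    (P : Subgroup S) (φ : P →* S) (hinj : Function.Injective φ)
    (hne : (A.Fix P φ).Nonempty) :
    Nat.card (A.Fix P φ)
      = Nat.card (A.dset (fun v : φ.range => (v : S)) (fun v : φ.range => (v : S))) := by
  classical
  have hsel : ∀ v : φ.range, ∃ u : P, φ u = (v : S) := fun v => MonoidHom.mem_range.mp v.2
  choose sel hsel' using hsel
  have E1 : A.Fix P φ = A.dset (fun v : φ.range => ((sel v : P) : S)) (fun v : φ.range => (v : S)) := by
    ext x
    constructor
    · intro H v
      have h := H (sel v)
      simpa only [hsel'] using h
    · intro H u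
      have h2 := H ⟨φ u, ⟨u, rfl⟩⟩
      have h3 : sel ⟨φ u, ⟨u, rfl⟩⟩ = u := hinj (hsel' ⟨φ u, ⟨u, rfl⟩⟩)
      simpa only [h3] using h2
  have E2 : A.dset (fun u : P => φ u) (fun u : P => (u : S))
      = A.dset (fun v : φ.range => (v : S)) (fun v : φ.range => ((sel v : P) : S)) := by
    ext x
    constructor
    · intro H v
      have h := H (sel v)
      simpa only [hsel'] using h
    · intro H u
      have h2 := H ⟨φ u, ⟨u, rfl⟩⟩
      have h3 : sel ⟨φ u, ⟨u, rfl⟩⟩ = u := hinj (hsel' ⟨φ u, ⟨u, rfl⟩⟩)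
      simpa only [h3] using h2
  have hne2 : (A.dset (fun v : φ.range => (v : S)) (fun v : φ.range => ((sel v : P) : S))).Nonempty := by
    rw [← E2]
    exact A.dset_fwd hfrob h0 _ _ (A.fix_eq_dset P φ ▸ hne)
  rw [E1]
  exact (A.dset_card_cancel hfrob (fun v : φ.range => (v : S)) (fun v : φ.range => (v : S))
    (fun v : φ.range => ((sel v : P) : S)) hne2).symm

/-- `|X^{(φP, φ⁻¹)}|` equals `|X^{(P, incl)}|`. -/
lemma card_fix_inv (hfrob : FrobeniusRec A)
    (P : Subgroup S) (φ : P →* S) (χ : ↥φ.range →* S)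
    (hχ : ∀ u : P, χ ⟨φ u, ⟨u, rfl⟩⟩ = (u : S)) (hne : (A.Fix P φ).Nonempty) :
    Nat.card (A.Fix φ.range χ)
      = Nat.card (A.dset (fun u : P => (u : S)) (fun u : P => (u : S))) := by
  rw [A.fix_range_inv_eq P φ χ hχ]
  exact (A.dset_card_cancel hfrob (fun u : P => (u : S)) (fun u : P => (u : S))
    (fun u : P => φ u) (A.fix_eq_dset P φ ▸ hne)).symm

end Aux18b

end BisetAction

/-- Let `S` be a finite `p`-group and `X` a finite bifree `(S,S)`-biset
with `|X|/|S|` prime to `p`, satisfying Frobenius reciprocity.  Then: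
(i) `X^{(P,φ)} ≠ ∅ ↔ X^{(φ(P),φ⁻¹)} ≠ ∅` for every injective `φ : P → S`, i.e.
    `Pre-Fix(X) = Pre-Fix(op X)`;
(ii) `Pre-Fix(X)` is level-wise closed;
(iii) if `φ : P → S` and `ψ : Q → S` are injective with nonempty fixed-point sets and
      `φ(P) = ψ(Q)`, then `|X^{(P,φ)}| = |X^{(Q,ψ)}|`;
(iv) if `φ, ψ : P → S` are injective with nonempty fixed-point sets, then
     `|X^{(φ(P),φ⁻¹)}| = |X^{(ψ(P),ψ⁻¹)}|`. -/
theorem frobeniusRec_preFix_properties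
    (p : ℕ) (hp : p.Prime) (S : Type*) [Group S] [Finite S] (hS : IsPGroup p S)
    (X : Type*) [Finite X] (A : BisetAction S S X) (hA : A.Bifree)
    (hcard : ¬ p ∣ Nat.card X / Nat.card S) (hfrob : FrobeniusRec A) :
    (∀ (P : Subgroup S) (φ : P →* S), Function.Injective φ →
      ∀ χ : φ.range →* S, (∀ u : P, χ ⟨φ u, ⟨u, rfl⟩⟩ = (u : S)) →
      ((A.Fix P φ).Nonempty ↔ (A.Fix φ.range χ).Nonempty)) ∧
    (∀ P Q : Subgroup S, preFixHom A P Q = preFixHom A.op P Q) ∧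
    LevelwiseClosed (preFixHom A) ∧
    (∀ (P Q : Subgroup S) (φ : P →* S) (ψ : Q →* S),
      Function.Injective φ → Function.Injective ψ →
      (A.Fix P φ).Nonempty → (A.Fix Q ψ).Nonempty →
      MonoidHom.range φ = MonoidHom.range ψ →
      Nat.card (A.Fix P φ) = Nat.card (A.Fix Q ψ)) ∧
    (∀ (P : Subgroup S) (φ ψ : P →* S),
      Function.Injective φ → Function.Injective ψ →
      (A.Fix P φ).Nonempty → (A.Fix P ψ).Nonempty →
      ∀ (χφ : φ.range →* S) (χψ : ψ.range →* S),
        (∀ u : P, χφ ⟨φ u, ⟨u, rfl⟩⟩ = (u : S)) →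
        (∀ u : P, χψ ⟨ψ u, ⟨u, rfl⟩⟩ = (u : S)) →
        Nat.card (A.Fix φ.range χφ) = Nat.card (A.Fix ψ.range χψ)) := by
  classical
  have h0 : (A.dset (id : S → S) id).Nonempty := A.dset_id_id_nonempty hp hS hA hcard hfrob
  have main1 : ∀ (P : Subgroup S) (φ : P →* S), Function.Injective φ →
      ∀ χ : φ.range →* S, (∀ u : P, χ ⟨φ u, ⟨u, rfl⟩⟩ = (u : S)) →
      ((A.Fix P φ).Nonempty ↔ (A.Fix φ.range χ).Nonempty) := by
    intro P φ hinj χ hχ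
    rw [A.fix_range_inv_eq P φ χ hχ, A.fix_eq_dset P φ]
    exact ⟨A.dset_fwd hfrob h0 _ _, A.dset_fwd hfrob h0 _ _⟩
  refine ⟨main1, ?_, ⟨?_, ?_, ?_⟩, ?_, ?_⟩
  · -- Pre-Fix(X) = Pre-Fix(op X)
    intro P Q
    ext φ
    simp only [preFixHom, Set.mem_setOf_eq]
    refine and_congr_right fun _ => and_congr_right fun _ => ?_
    rw [A.op_fix_eq P φ, A.fix_eq_dset P φ]
    exact ⟨A.dset_fwd hfrob h0 _ _, A.dset_fwd hfrob h0 _ _⟩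
  · -- levelwise closed: conjugation maps
    intro P Q s hs
    obtain ⟨x₀, hx₀⟩ := h0
    have hx : ∀ t : S, A.rmul x₀ t = A.smul t x₀ := hx₀
    have hc : ∀ u : P, conjHom s P u = s * (u : S) * s⁻¹ := fun u => rfl
    refine ⟨?_, fun u => ?_, ⟨A.smul s x₀, fun u => ?_⟩⟩
    · intro a b hab
      have h1 : s * (a : S) * s⁻¹ = s * (b : S) * s⁻¹ := by rw [← hc, ← hc, hab]
      exact Subtype.ext (mul_left_cancel (mul_right_cancel h1))
    · rw [hc]
      exact hs ↑u u.2
    · rw [hc, A.smul_rmul, hx, A.smul_smul, A.smul_smul,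
        mul_assoc (s * (u : S)), inv_mul_cancel, mul_one]
  · -- levelwise closed: inverses
    intro P Q φ hφ hrange ψ hψ
    subst hrange
    obtain ⟨hinj, hinto, hne⟩ := hφ
    have hrep : ∀ v : ↥φ.range, ∃ u : P, φ u = (v : S) := fun v => MonoidHom.mem_range.mp v.2
    refine ⟨?_, ?_, ?_⟩
    · intro a b hab
      obtain ⟨ua, hua⟩ := hrep a
      obtain ⟨ub, hub⟩ := hrep b
      have ha : a = ⟨φ ua, ⟨ua, rfl⟩⟩ := Subtype.ext hua.symm
      have hb : b = ⟨φ ub, ⟨ub, rfl⟩⟩ := Subtype.ext hub.symm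
      rw [ha, hb, show ψ ⟨φ ua, ⟨ua, rfl⟩⟩ = ua from hψ ua _,
        show ψ ⟨φ ub, ⟨ub, rfl⟩⟩ = ub from hψ ub _] at hab
      rw [ha, hb]
      exact Subtype.ext (congrArg (⇑φ) (Subtype.ext hab))
    · intro v
      obtain ⟨u, hu⟩ := hrep v
      have hv : v = ⟨φ u, ⟨u, rfl⟩⟩ := Subtype.ext hu.symm
      rw [hv, show ψ ⟨φ u, ⟨u, rfl⟩⟩ = u from hψ u _]
      exact u.2
    · rw [A.fix_range_inv_eq P φ ψ (fun u => hψ u ⟨u, rfl⟩)]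
      exact A.dset_fwd hfrob h0 (fun u : P => (u : S)) (fun u : P => φ u) hne
  · -- levelwise closed: composition
    intro P Q R φ hφ ψ hψ hrange hrangeψ
    subst hrange
    obtain ⟨hinjφ, hintoφ, hneφ⟩ := hφ
    obtain ⟨hinjψ, hintoψ, hneψ⟩ := hψ
    refine ⟨?_, fun u => hintoψ _, ?_⟩
    · intro a b hab
      rw [MonoidHom.comp_apply, MonoidHom.comp_apply] at hab
      have h2 := hinjψ hab
      have h3 : φ a = φ b := congrArg Subtype.val h2
      exact hinjφ h3
    · refine A.dset_trans hfrob (fun u : P => (u : S)) _ (fun u : P => φ u) hneφ ?_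
      have h5 : (A.dset (fun u : P => φ u) (fun u : P => ψ ⟨φ u, ⟨u, rfl⟩⟩)).Nonempty := by
        rw [← A.fix_range_eq P φ (fun v => ψ v)]
        exact hneψ
      exact h5
  · -- (iii)
    intro P Q φ ψ hinjφ hinjψ hneφ hneψ hrange
    have h1 := A.card_fix_eq_range hfrob h0 P φ hinjφ hneφ
    have h2 := A.card_fix_eq_range hfrob h0 Q ψ hinjψ hneψ
    rw [hrange] at h1
    exact h1.trans h2.symm
  · -- (iv)
    intro P φ ψ hinjφ hinjψ hneφ hneψ χφ χψ hχφ hχψ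
    rw [A.card_fix_inv hfrob P φ χφ hχφ hneφ, A.card_fix_inv hfrob P ψ χψ hχψ hneψ]
end
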